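/- arXiv:2203.08572 — 3 statements merged into one kernel-verified Lean document; each statement's English description precedes it below -/
import Mathlib

section
/- Let I = I(G_{n,r}) be the edge ideal of G_{n,r}. Every monomial x^a ∈ I^{(t)} with deg(x^a) ≥ 2t lies in I^t; equivalently, I^t is generated by the set L(t) of monomials of degree at least 2t whose weight on every minimal vertex cover of G_{n,r} is at least t. -/
open MvPolynomial

/-- The graph `G_{n,r}`: vertices `x_1,…,x_n` in cyclic order (indexed by `ZMod n`),
where for `i < j` the vertices `x_i, x_j` are adjacent iff `r+1 ≤ j-i ≤ n-(r+1)`. -/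
def Gnr (n r : ℕ) : SimpleGraph (ZMod n) :=
  SimpleGraph.fromRel (fun i j => r + 1 ≤ j.val - i.val ∧ j.val - i.val ≤ n - (r + 1))

/-- A vertex cover (as a finite set of vertices): meets every edge. -/
def IsVertexCover {V : Type*} (G : SimpleGraph V) (C : Finset V) : Prop :=
  ∀ ⦃a b : V⦄, G.Adj a b → a ∈ C ∨ b ∈ C

/-- A minimal vertex cover. -/
def IsMinVertexCover {V : Type*} (G : SimpleGraph V) (C : Finset V) : Prop :=
  IsVertexCover G C ∧ ∀ D ⊆ C, IsVertexCover G D → D = C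

/-- The edge ideal `I(G) = (x_i x_j : {x_i,x_j} ∈ E(G))` of a graph. -/
noncomputable def edgeIdeal (k : Type*) [Field k] {V : Type*} (G : SimpleGraph V) :
    Ideal (MvPolynomial V k) :=
  Ideal.span {p | ∃ i j : V, G.Adj i j ∧ p = X i * X j}

/-- The monomial prime ideal generated by the variables of a vertex set `C`. -/
noncomputable def coverPrime (k : Type*) [Field k] {V : Type*} (C : Finset V) :
    Ideal (MvPolynomial V k) :=
  Ideal.span ((fun i => (X i : MvPolynomial V k)) '' ↑C)

/-- The `t`-th symbolic power of the edge ideal of `G`: the intersection of the `t`-th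
powers of the monomial primes corresponding to the minimal vertex covers of `G`. -/
noncomputable def symbPow (k : Type*) [Field k] {V : Type*} (G : SimpleGraph V) (t : ℕ) :
    Ideal (MvPolynomial V k) :=
  ⨅ (C : Finset V) (_ : IsMinVertexCover G C), (coverPrime k C) ^ t


set_option linter.unusedSectionVars false
open Pointwise
set_option maxHeartbeats 1000000

section Graph
variable {V : Type*} [Fintype V] [DecidableEq V] (G : SimpleGraph V)

open Classical in
/-- The set of neighbours of a finite vertex set. -/
noncomputable def nbrs (S : Finset V) : Finset V :=
  Finset.univ.filter (fun v => ∃ s ∈ S, G.Adj s v)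

/-- Independence of a finite vertex set. -/
def IndepF (S : Finset V) : Prop := ∀ u ∈ S, ∀ v ∈ S, ¬ G.Adj u v

/-- Weight of a finite vertex set. -/
def wS (a : V → ℕ) (S : Finset V) : ℕ := ∑ v ∈ S, a v

variable {G}

lemma mem_nbrs {S : Finset V} {v : V} : v ∈ nbrs G S ↔ ∃ s ∈ S, G.Adj s v := by
  classical
  simp [nbrs]

lemma nbrs_mono {S T : Finset V} (h : S ⊆ T) : nbrs G S ⊆ nbrs G T := by
  intro x hx
  obtain ⟨s, hs, hadj⟩ := mem_nbrs.mp hx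
  exact mem_nbrs.mpr ⟨s, h hs, hadj⟩

lemma IndepF.subset {S T : Finset V} (h : S ⊆ T) (hT : IndepF G T) : IndepF G S :=
  fun u hu v hv => hT u (h hu) v (h hv)

lemma IndepF.not_mem_nbrs {Q : Finset V} (hQ : IndepF G Q) {q : V} (hq : q ∈ Q) :
    q ∉ nbrs G Q := by
  intro hqn
  obtain ⟨q', hq', hadj⟩ := mem_nbrs.mp hqn
  exact hQ q' hq' q hq hadj

lemma IndepF.empty : IndepF G (∅ : Finset V) := by
  intro u hu
  simp at hu

/-- Weighted Hammer–Hansen–Simeone: if the maximum weight `W` of an independent set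
exceeds half the total weight, then some vertex of positive weight belongs to every
maximum-weight independent set. -/
theorem hhs_core (a : V → ℕ) (W : ℕ)
    (hmax : ∀ S : Finset V, IndepF G S → wS a S ≤ W)
    (hW : ∃ S : Finset V, IndepF G S ∧ wS a S = W)
    (hD : ∑ v, a v < 2 * W) :
    ∃ p : V, 0 < a p ∧ ∀ S : Finset V, IndepF G S → wS a S = W → p ∈ S := by
  classical
  set N := Fintype.card V with hN
  set d : Finset V → ℤ := fun Q => (wS a Q : ℤ) - (wS a (nbrs G Q) : ℤ) with hd
  set Indeps : Finset (Finset V) := Finset.univ.filter (fun S => IndepF G S) with hIndeps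
  have hmemI : ∀ S : Finset V, S ∈ Indeps ↔ IndepF G S := by
    intro S
    simp [hIndeps]
  obtain ⟨Q₀, hQ₀, hQ₀max⟩ := Indeps.exists_max_image d
    ⟨∅, (hmemI ∅).mpr IndepF.empty⟩
  set key : Finset V → ℕ := fun Q => (N + 1) * wS a Q + Q.card with hkey
  obtain ⟨Q, hQmem, hQmin⟩ := (Indeps.filter (fun Q' => d Q₀ ≤ d Q')).exists_min_image key
    ⟨Q₀, by simp [hQ₀]⟩
  rw [Finset.mem_filter] at hQmem
  have hQind : IndepF G Q := (hmemI Q).mp hQmem.1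
  have hQcrit : ∀ Q' : Finset V, IndepF G Q' → d Q' ≤ d Q :=
    fun Q' hQ' => le_trans (hQ₀max Q' ((hmemI Q').mpr hQ')) hQmem.2
  -- main step: Q is contained in every maximum independent set
  have main : ∀ S : Finset V, IndepF G S → wS a S = W → Q ⊆ S := by
    intro S hS hSW
    -- the exchange set is independent
    have hS' : IndepF G (Q ∪ (S \ (nbrs G Q))) := by
      intro u hu v hv hadj
      rcases Finset.mem_union.mp hu with hu' | hu' <;>
        rcases Finset.mem_union.mp hv with hv' | hv'
      · exact hQind u hu' v hv' hadj
      · exact (Finset.mem_sdiff.mp hv').2 (mem_nbrs.mpr ⟨u, hu', hadj⟩)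
      · exact (Finset.mem_sdiff.mp hu').2 (mem_nbrs.mpr ⟨v, hv', hadj.symm⟩)
      · exact hS u (Finset.mem_sdiff.mp hu').1 v (Finset.mem_sdiff.mp hv').1 hadj
    have hQS : Q ∩ (S \ (nbrs G Q)) = Q ∩ S := by
      ext x
      simp only [Finset.mem_inter, Finset.mem_sdiff]
      exact ⟨fun h => ⟨h.1, h.2.1⟩, fun h => ⟨h.1, h.2, hQind.not_mem_nbrs h.1⟩⟩
    have key1 : wS a (Q ∪ (S \ (nbrs G Q))) + wS a (Q ∩ S) = wS a Q + wS a (S \ (nbrs G Q)) := by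
      simp only [wS]
      rw [← hQS]
      exact Finset.sum_union_inter
    have key2 : wS a (S ∩ (nbrs G Q)) + wS a (S \ (nbrs G Q)) = wS a S := by
      simp only [wS]
      exact Finset.sum_inter_add_sum_sdiff S (nbrs G Q) a
    have hS'le : wS a (Q ∪ (S \ (nbrs G Q))) ≤ W := hmax _ hS'
    have dagger : wS a Q ≤ wS a (Q ∩ S) + wS a (S ∩ (nbrs G Q)) := by omega
    -- disjointness
    have hdisj : Disjoint (S ∩ (nbrs G Q)) (nbrs G (Q ∩ S)) := by
      rw [Finset.disjoint_left]
      intro x hx hxn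
      obtain ⟨y, hy, hadj⟩ := mem_nbrs.mp hxn
      exact hS y (Finset.mem_inter.mp hy).2 x (Finset.mem_inter.mp hx).1 hadj
    have hsub : (S ∩ (nbrs G Q)) ∪ nbrs G (Q ∩ S) ⊆ (nbrs G Q) := by
      intro x hx
      rcases Finset.mem_union.mp hx with hx' | hx'
      · exact (Finset.mem_inter.mp hx').2
      · exact nbrs_mono Finset.inter_subset_left hx'
    have key3 : wS a (S ∩ (nbrs G Q)) + wS a (nbrs G (Q ∩ S)) ≤ wS a (nbrs G Q) := by
      simp only [wS]
      rw [← Finset.sum_union hdisj]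
      exact Finset.sum_le_sum_of_subset hsub
    have hQSind : IndepF G (Q ∩ S) := hQind.subset Finset.inter_subset_left
    have key4 : d (Q ∩ S) ≤ d Q := hQcrit _ hQSind
    have keyw : wS a (Q ∩ S) ≤ wS a Q :=
      Finset.sum_le_sum_of_subset Finset.inter_subset_left
    -- conclude d (Q ∩ S) = d Q, i.e. Q ∩ S is critical as well
    have hcrit' : d Q ≤ d (Q ∩ S) := by
      simp only [hd]
      have h3 : (wS a (S ∩ (nbrs G Q)) : ℤ) + (wS a (nbrs G (Q ∩ S)) : ℤ) ≤ (wS a (nbrs G Q) : ℤ) := by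
        exact_mod_cast key3
      have hdag : (wS a Q : ℤ) ≤ (wS a (Q ∩ S) : ℤ) + (wS a (S ∩ (nbrs G Q)) : ℤ) := by
        exact_mod_cast dagger
      omega
    have hmemQS : (Q ∩ S) ∈ Indeps.filter (fun Q' => d Q₀ ≤ d Q') := by
      rw [Finset.mem_filter]
      exact ⟨(hmemI _).mpr hQSind, le_trans hQmem.2 hcrit'⟩
    have hkeyle : key Q ≤ key (Q ∩ S) := hQmin _ hmemQS
    have hcard : (Q ∩ S).card ≤ Q.card := Finset.card_le_card Finset.inter_subset_left
    have hcardN : Q.card ≤ N := Finset.card_le_univ Q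
    have hcardN' : (Q ∩ S).card ≤ N := Finset.card_le_univ _
    -- weights equal
    have hw : wS a (Q ∩ S) = wS a Q := by
      by_contra hne
      have hlt : wS a (Q ∩ S) < wS a Q := lt_of_le_of_ne keyw hne
      have h1 : key (Q ∩ S) < key Q := by
        simp only [hkey]
        calc (N + 1) * wS a (Q ∩ S) + (Q ∩ S).card
            ≤ (N + 1) * wS a (Q ∩ S) + N := by omega
          _ < (N + 1) * (wS a (Q ∩ S) + 1) := by
              rw [Nat.mul_add, Nat.mul_one]
              exact Nat.add_lt_add_left (Nat.lt_succ_self N) _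
          _ ≤ (N + 1) * wS a Q := Nat.mul_le_mul_left _ hlt
          _ ≤ (N + 1) * wS a Q + Q.card := Nat.le_add_right _ _
      omega
    have hcardeq : (Q ∩ S).card = Q.card := by
      simp only [hkey, hw] at hkeyle
      exact le_antisymm hcard (Nat.le_of_add_le_add_left hkeyle)
    have : Q ∩ S = Q := Finset.eq_of_subset_of_card_le Finset.inter_subset_left (le_of_eq hcardeq.symm)
    exact Finset.inter_eq_left.mp this
  -- positivity of the weight of Q
  obtain ⟨S₀, hS₀, hS₀W⟩ := hW
  have hdisj₀ : Disjoint S₀ (nbrs G S₀) := by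
    rw [Finset.disjoint_left]
    exact fun x hx => hS₀.not_mem_nbrs hx
  have hsum₀ : wS a S₀ + wS a (nbrs G S₀) ≤ ∑ v, a v := by
    simp only [wS]
    rw [← Finset.sum_union hdisj₀]
    exact Finset.sum_le_sum_of_subset (Finset.subset_univ _)
  have hd₀ : 0 < d S₀ := by
    simp only [hd]
    have : (wS a S₀ : ℤ) + (wS a (nbrs G S₀) : ℤ) ≤ ((∑ v, a v : ℕ) : ℤ) := by exact_mod_cast hsum₀
    have h2 : ((∑ v, a v : ℕ) : ℤ) < 2 * (W : ℤ) := by exact_mod_cast hD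
    have h3 : (wS a S₀ : ℤ) = (W : ℤ) := by exact_mod_cast hS₀W
    omega
  have hQpos : 0 < wS a Q := by
    have h4 := hQcrit S₀ hS₀
    have h5 : 0 < d Q := lt_of_lt_of_le hd₀ h4
    simp only [hd] at h5
    have : (0:ℤ) ≤ (wS a (nbrs G Q) : ℤ) := Int.natCast_nonneg _
    have h6 : (0:ℤ) < (wS a Q : ℤ) := by omega
    exact_mod_cast h6
  obtain ⟨p, hp, hppos⟩ : ∃ p ∈ Q, 0 < a p := by
    by_contra hcon
    push_neg at hcon
    have : wS a Q = 0 := Finset.sum_eq_zero (fun x hx => Nat.le_zero.mp (hcon x hx))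
    omega
  exact ⟨p, hppos, fun S hS hSW => main S hS hSW hp⟩

end Graph

section ZModHelpers
variable (n : ℕ) [NeZero n]

lemma zval_cast (v : ZMod n) : ((v.val : ℕ) : ZMod n) = v := by
  rw [ZMod.natCast_val, ZMod.cast_id]

lemma sub_val_of_le {u v : ZMod n} (h : u.val ≤ v.val) : (v - u).val = v.val - u.val := by
  have h2 : v - u = ((v.val - u.val : ℕ) : ZMod n) := by
    rw [Nat.cast_sub h, zval_cast, zval_cast]
  rw [h2, ZMod.val_cast_of_lt (lt_of_le_of_lt (Nat.sub_le _ _) (ZMod.val_lt v))]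

lemma sub_val_of_gt {u v : ZMod n} (h : v.val < u.val) : (v - u).val = v.val + n - u.val := by
  have h0 : (u - v) ≠ 0 := by
    intro hz
    have h3 : (u - v).val = u.val - v.val := sub_val_of_le n (le_of_lt h)
    rw [hz] at h3
    simp only [ZMod.val_zero] at h3
    omega
  have h1 : v - u = -(u - v) := by ring
  rw [h1, ZMod.neg_val, if_neg h0, sub_val_of_le n (le_of_lt h)]
  have := ZMod.val_lt u
  omega

lemma gnr_adj_iff (r : ℕ) (x y : ZMod n) :
    (Gnr n r).Adj x y ↔ r + 1 ≤ (y - x).val ∧ (y - x).val ≤ n - (r + 1) := by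
  rw [Gnr, SimpleGraph.fromRel_adj]
  rcases le_or_gt x.val y.val with h | h
  · have hc : (y - x).val = y.val - x.val := sub_val_of_le n h
    constructor
    · rintro ⟨hne, hrel | hrel⟩
      · exact ⟨by omega, by omega⟩
      · exfalso
        have : x.val - y.val = 0 := by omega
        omega
    · rintro ⟨h1, h2⟩
      refine ⟨fun heq => ?_, Or.inl ⟨by omega, by omega⟩⟩
      subst heq
      simp only [sub_self, ZMod.val_zero] at hc h1
      omega
  · have hc : (y - x).val = y.val + n - x.val := sub_val_of_gt n h
    have hc' : (x - y).val = x.val - y.val := sub_val_of_le n (le_of_lt h)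
    have hxn := ZMod.val_lt x
    have hyn := ZMod.val_lt y
    constructor
    · rintro ⟨hne, hrel | hrel⟩
      · exfalso
        have : y.val - x.val = 0 := by omega
        omega
      · exact ⟨by omega, by omega⟩
    · rintro ⟨h1, h2⟩
      refine ⟨fun heq => ?_, Or.inr ⟨by omega, by omega⟩⟩
      subst heq
      omega

end ZModHelpers

section Windows
variable (n r : ℕ) [NeZero n]

/-- The window of `r+1` cyclically consecutive positions starting at `s`. -/
def win (s : ZMod n) : Finset (ZMod n) := (Finset.range (r+1)).image (fun j : ℕ => s + (j : ZMod n))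

lemma mem_win (hr : r < n) {s v : ZMod n} : v ∈ win n r s ↔ (v - s).val ≤ r := by
  constructor
  · intro hv
    obtain ⟨j, hj, rfl⟩ := Finset.mem_image.mp hv
    rw [Finset.mem_range] at hj
    have h1 : s + (j : ZMod n) - s = (j : ZMod n) := by ring
    rw [h1, ZMod.val_cast_of_lt (by omega)]
    omega
  · intro hv
    refine Finset.mem_image.mpr ⟨(v - s).val, Finset.mem_range.mpr (by omega), ?_⟩
    rw [zval_cast]
    ring

lemma self_mem_win (hr : r < n) (s : ZMod n) : s ∈ win n r s := by
  rw [mem_win n r hr]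
  simp only [sub_self, ZMod.val_zero]
  omega

lemma win_indep (hr2 : 2*r + 2 ≤ n) (s : ZMod n) : IndepF (Gnr n r) (win n r s) := by
  intro u hu v hv hadj
  have hr : r < n := by omega
  have hu' : (u - s).val ≤ r := (mem_win n r hr).mp hu
  have hv' : (v - s).val ≤ r := (mem_win n r hr).mp hv
  have h1 := (gnr_adj_iff n r u v).mp hadj
  have h2 := (gnr_adj_iff n r v u).mp hadj.symm
  rcases le_or_gt (u-s).val (v-s).val with h | h
  · have he : v - u = (v - s) - (u - s) := by ring
    have : (v - u).val = (v-s).val - (u-s).val := by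
      rw [he, sub_val_of_le n h]
    omega
  · have he : u - v = (u - s) - (v - s) := by ring
    have : (u - v).val = (u-s).val - (v-s).val := by
      rw [he, sub_val_of_le n (le_of_lt h)]
    omega

end Windows

section PairStep
variable (n r : ℕ) [NeZero n]

lemma pair_step (hr2 : 2*r + 2 ≤ n) (t : ℕ) (ht : 1 ≤ t) (a : ZMod n →₀ ℕ)
    (hsum : ∑ v, a v = 2 * t)
    (hwin : ∀ s : ZMod n, wS (⇑a) (win n r s) ≤ t) :
    ∃ u q : ZMod n, (Gnr n r).Adj u q ∧ 0 < a u ∧ 0 < a q ∧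
      ∀ s : ZMod n, u ∉ win n r s → q ∉ win n r s → wS (⇑a) (win n r s) + 1 ≤ t := by
  classical
  have hrn : r < n := by omega
  -- support is nonempty
  have hTne : (Finset.univ.filter (fun v : ZMod n => 0 < a v)).Nonempty := by
    by_contra hcon
    rw [Finset.not_nonempty_iff_eq_empty] at hcon
    have hz : ∑ v, a v = 0 := Finset.sum_eq_zero (fun v _ => by
      by_contra hv
      have hmem : v ∈ Finset.univ.filter (fun v : ZMod n => 0 < a v) := by
        simp only [Finset.mem_filter, Finset.mem_univ, true_and]
        omega
      rw [hcon] at hmem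
      simp at hmem)
    omega
  obtain ⟨u, huT, humin⟩ := (Finset.univ.filter (fun v : ZMod n => 0 < a v)).exists_min_image
    (fun v => v.val) hTne
  have hau : 0 < a u := (Finset.mem_filter.mp huT).2
  have humin' : ∀ v : ZMod n, 0 < a v → u.val ≤ v.val := by
    intro v hv
    exact humin v (by simp only [Finset.mem_filter, Finset.mem_univ, true_and]; exact hv)
  -- prefix sums
  set F : ℕ → ℕ := fun x => ∑ v ∈ Finset.univ.filter (fun v : ZMod n => v.val ≤ x), a v with hF
  have hFtop : F (n-1) = 2*t := by
    rw [hF, ← hsum]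
    apply Finset.sum_congr ?_ (fun _ _ => rfl)
    ext v
    simp only [Finset.mem_filter, Finset.mem_univ, true_and, iff_true]
    have := ZMod.val_lt v
    omega
  have hex : ∃ x, t + 1 ≤ F x := ⟨n-1, by omega⟩
  set κ := Nat.find hex with hκ
  have hκspec : t + 1 ≤ F κ := Nat.find_spec hex
  have hκmin : ∀ y, y < κ → F y ≤ t := by
    intro y hy
    have := Nat.find_min hex hy
    omega
  have hκlt : κ < n := by
    have h1 : κ ≤ n - 1 := Nat.find_min' hex (by omega)
    omega
  set q : ZMod n := (κ : ZMod n) with hq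
  have hqval : q.val = κ := ZMod.val_cast_of_lt hκlt
  -- F is monotone
  have hFmono : ∀ x y, x ≤ y → F x ≤ F y := by
    intro x y hxy
    apply Finset.sum_le_sum_of_subset
    intro v hv
    simp only [Finset.mem_filter, Finset.mem_univ, true_and] at hv ⊢
    omega
  -- no support strictly below u.val
  have hzero_below : ∀ x, x < u.val → F x = 0 := by
    intro x hx
    apply Finset.sum_eq_zero
    intro v hv
    simp only [Finset.mem_filter, Finset.mem_univ, true_and] at hv
    by_contra hva
    have := humin' v (by omega)
    omega
  have huκ : u.val ≤ κ := by
    by_contra hcon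
    push_neg at hcon
    have := hzero_below κ hcon
    omega
  -- split lemma for F at κ
  have hsplitκ : F κ = (if 1 ≤ κ then F (κ - 1) else 0) + a q := by
    rcases Nat.eq_zero_or_pos κ with h0 | h1
    · rw [if_neg (show ¬ 1 ≤ κ by omega)]
      have hrfl : F κ = ∑ v ∈ Finset.univ.filter (fun v : ZMod n => v.val ≤ κ), a v := rfl
      rw [hrfl]
      have hfeq : Finset.univ.filter (fun v : ZMod n => v.val ≤ κ) = {q} := by
        ext v
        simp only [Finset.mem_filter, Finset.mem_univ, true_and, Finset.mem_singleton]
        constructor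
        · intro hv
          apply ZMod.val_injective
          omega
        · intro hv
          subst hv
          omega
      rw [hfeq, Finset.sum_singleton]
      omega
    · rw [if_pos (show 1 ≤ κ by omega)]
      have hfeq : Finset.univ.filter (fun v : ZMod n => v.val ≤ κ)
          = insert q (Finset.univ.filter (fun v : ZMod n => v.val ≤ κ - 1)) := by
        ext v
        simp only [Finset.mem_filter, Finset.mem_univ, true_and, Finset.mem_insert]
        constructor
        · intro hv
          rcases Nat.lt_or_ge v.val κ with h | h
          · right; omega
          · left
            apply ZMod.val_injective
            omega
        · rintro (hv | hv)
          · subst hv; omega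
          · omega
      have hrfl : F κ = ∑ v ∈ Finset.univ.filter (fun v : ZMod n => v.val ≤ κ), a v := rfl
      have hrfl2 : F (κ - 1)
          = ∑ v ∈ Finset.univ.filter (fun v : ZMod n => v.val ≤ κ - 1), a v := rfl
      rw [hrfl, hfeq, Finset.sum_insert (by
        simp only [Finset.mem_filter, Finset.mem_univ, true_and]
        omega), hrfl2]
      omega
  -- a q ≤ t from the window at q
  have haqle : a q ≤ t := by
    have h1 : a q ≤ wS (⇑a) (win n r q) :=
      Finset.single_le_sum (f := ⇑a) (fun i _ => Nat.zero_le _) (self_mem_win n r hrn q)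
    exact le_trans h1 (hwin q)
  have haq : 0 < a q := by
    rcases Nat.eq_zero_or_pos κ with h0 | h1
    · rw [if_neg (show ¬ 1 ≤ κ by omega)] at hsplitκ
      omega
    · rw [if_pos (show 1 ≤ κ by omega)] at hsplitκ
      have := hκmin (κ - 1) (by omega)
      omega
  -- u.val < κ, so u ≠ q
  have huval_lt : u.val < κ := by
    rcases Nat.lt_or_ge u.val κ with h | h
    · exact h
    · exfalso
      have huq : u.val = κ := by omega
      rcases Nat.eq_zero_or_pos κ with h0 | h1
      · rw [if_neg (show ¬ 1 ≤ κ by omega)] at hsplitκ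
        omega
      · rw [if_pos (show 1 ≤ κ by omega)] at hsplitκ
        have := hzero_below (κ - 1) (by omega)
        omega
  -- adjacency of u and q
  have hΔ : (q - u).val = κ - u.val := by
    rw [← hqval] at huκ ⊢
    exact sub_val_of_le n huκ
  have hadj : (Gnr n r).Adj u q := by
    rw [gnr_adj_iff]
    by_contra hcon
    rw [not_and_or] at hcon
    -- case split on which side fails
    have hcase : (q - u).val ≤ r ∨ n - r ≤ (q - u).val := by
      rcases hcon with h | h
      · left; omega
      · right; omega
    rcases hcase with hsmall | hbig
    · -- all the support below κ sits in the window at u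
      have hkey : F κ ≤ wS (⇑a) (win n r u) := by
        apply Finset.sum_le_sum_of_ne_zero
        intro v hv hva
        simp only [Finset.mem_filter, Finset.mem_univ, true_and] at hv
        rw [mem_win n r hrn]
        have h2 : u.val ≤ v.val := humin' v (by omega)
        have h3 : (v - u).val = v.val - u.val := by
          rw [show v.val - u.val = v.val - u.val from rfl] at *
          exact sub_val_of_le n h2
        omega
      have := hwin u
      omega
    · -- the window at q catches everything of value ≥ κ together with u
      have hκ1 : 1 ≤ κ := by omega
      set Hi := Finset.univ.filter (fun v : ZMod n => κ ≤ v.val) with hHi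
      set Lo := Finset.univ.filter (fun v : ZMod n => v.val ≤ u.val) with hLo
      have hdisj : Disjoint Hi Lo := by
        rw [Finset.disjoint_left]
        intro x hx hx'
        simp only [hHi, hLo, Finset.mem_filter, Finset.mem_univ, true_and] at hx hx'
        omega
      have hHisum : F (κ - 1) + ∑ v ∈ Hi, a v = 2 * t := by
        have h5 := Finset.sum_filter_add_sum_filter_not Finset.univ
          (fun v : ZMod n => v.val ≤ κ - 1) (⇑a)
        have hfeq : Finset.univ.filter (fun v : ZMod n => ¬ v.val ≤ κ - 1) = Hi := by
          ext v
          simp only [hHi, Finset.mem_filter, Finset.mem_univ, true_and]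
          omega
        rw [hfeq] at h5
        have hrfl : F (κ - 1)
            = ∑ v ∈ Finset.univ.filter (fun v : ZMod n => v.val ≤ κ - 1), a v := rfl
        omega
      have hHiwin : ∀ v ∈ Hi, a v ≠ 0 → v ∈ win n r q := by
        intro v hv hva
        simp only [hHi, Finset.mem_filter, Finset.mem_univ, true_and] at hv
        rw [mem_win n r hrn]
        have h3 : (v - q).val = v.val - κ := by
          rw [← hqval] at hv ⊢
          exact sub_val_of_le n hv
        have := ZMod.val_lt v
        omega
      have hLowin : ∀ v ∈ Lo, a v ≠ 0 → v ∈ win n r q := by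
        intro v hv hva
        simp only [hLo, Finset.mem_filter, Finset.mem_univ, true_and] at hv
        rw [mem_win n r hrn]
        have hlt : v.val < q.val := by omega
        have h3 : (v - q).val = v.val + n - q.val := sub_val_of_gt n hlt
        omega
      have hunion : ∑ v ∈ Hi, a v + ∑ v ∈ Lo, a v ≤ wS (⇑a) (win n r q) := by
        rw [← Finset.sum_union hdisj]
        apply Finset.sum_le_sum_of_ne_zero
        intro v hv hva
        rcases Finset.mem_union.mp hv with h | h
        · exact hHiwin v h hva
        · exact hLowin v h hva
      have hLolb : a u ≤ ∑ v ∈ Lo, a v := by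
        refine Finset.single_le_sum (f := ⇑a) (fun i _ => Nat.zero_le _) ?_
        simp only [hLo, Finset.mem_filter, Finset.mem_univ, true_and]
        exact le_refl _
      have hFκ1 : F (κ - 1) ≤ t := hκmin (κ - 1) (by omega)
      have := hwin q
      omega

  -- the key hitting property
  refine ⟨u, q, hadj, hau, haq, ?_⟩
  intro s hus hqs
  have hκ1 : 1 ≤ κ := by omega
  set Mid := Finset.univ.filter (fun v : ZMod n => u.val < v.val ∧ v.val < κ) with hMid
  set Out := Finset.univ.filter (fun v : ZMod n => κ < v.val) with hOut
  set Lo := Finset.univ.filter (fun v : ZMod n => v.val ≤ u.val) with hLo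
  -- Mid ∪ Lo is the prefix below κ
  have hMidLo : ∑ v ∈ Mid, a v + ∑ v ∈ Lo, a v = F (κ - 1) := by
    rw [hF]
    have hdisj : Disjoint Mid Lo := by
      rw [Finset.disjoint_left]
      intro x hx hx'
      simp only [hMid, hLo, Finset.mem_filter, Finset.mem_univ, true_and] at hx hx'
      omega
    rw [← Finset.sum_union hdisj]
    apply Finset.sum_congr ?_ (fun _ _ => rfl)
    ext v
    simp only [hMid, hLo, Finset.mem_union, Finset.mem_filter, Finset.mem_univ, true_and]
    omega
  have hLolb : a u ≤ ∑ v ∈ Lo, a v := by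
    refine Finset.single_le_sum (f := ⇑a) (fun i _ => Nat.zero_le _) ?_
    simp only [hLo, Finset.mem_filter, Finset.mem_univ, true_and]
    exact le_refl _
  have hFκ1 : F (κ - 1) ≤ t := hκmin (κ - 1) (by omega)
  have hMidbound : ∑ v ∈ Mid, a v + 1 ≤ t := by omega
  have hOutbound : ∑ v ∈ Out, a v + (t + 1) ≤ 2 * t := by
    have h5 := Finset.sum_filter_add_sum_filter_not Finset.univ
      (fun v : ZMod n => v.val ≤ κ) (⇑a)
    have hfeq : Finset.univ.filter (fun v : ZMod n => ¬ v.val ≤ κ) = Out := by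
      ext v
      simp only [hOut, Finset.mem_filter, Finset.mem_univ, true_and]
      omega
    rw [hfeq] at h5
    have : F κ = ∑ v ∈ Finset.univ.filter (fun v : ZMod n => v.val ≤ κ), a v := rfl
    omega
  -- every supported element of the window is in Mid or Out
  have hclassify : ∀ v ∈ win n r s, a v ≠ 0 → v ∈ Mid ∨ v ∈ Out := by
    intro v hv hva
    have h2 : u.val ≤ v.val := humin' v (by omega)
    have h3 : v.val ≠ u.val := by
      intro heq
      exact hus (by rwa [ZMod.val_injective n heq] at hv)
    have h4 : v.val ≠ κ := by
      intro heq
      apply hqs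
      have : v = q := by
        apply ZMod.val_injective
        rw [hqval, heq]
      rwa [this] at hv
    simp only [hMid, hOut, Finset.mem_filter, Finset.mem_univ, true_and]
    omega
  -- not both Mid and Out are hit
  have hnotboth : ∀ v₁ ∈ win n r s, ∀ v₂ ∈ win n r s, v₁ ∈ Mid → v₂ ∈ Out → False := by
    intro v₁ hv₁ v₂ hv₂ hm ho
    simp only [hMid, Finset.mem_filter, Finset.mem_univ, true_and] at hm
    simp only [hOut, Finset.mem_filter, Finset.mem_univ, true_and] at ho
    rcases le_or_gt s.val v₁.val with hσ | hσ
    · -- q would be in the window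
      apply hqs
      rw [mem_win n r hrn]
      have h6 : (v₂ - s).val = v₂.val - s.val := sub_val_of_le n (by omega)
      have h7 : (v₂ - s).val ≤ r := (mem_win n r hrn).mp hv₂
      have h8 : (q - s).val = κ - s.val := by
        rw [← hqval]
        exact sub_val_of_le n (by omega)
      omega
    · -- u would be in the window
      apply hus
      rw [mem_win n r hrn]
      have h6 : (v₁ - s).val = v₁.val + n - s.val := sub_val_of_gt n hσ
      have h7 : (v₁ - s).val ≤ r := (mem_win n r hrn).mp hv₁
      have h8 : (u - s).val = u.val + n - s.val := sub_val_of_gt n (by omega)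
      omega
  by_cases hcase : ∀ v ∈ win n r s, a v ≠ 0 → v ∈ Mid
  · have h9 : wS (⇑a) (win n r s) ≤ ∑ v ∈ Mid, a v :=
      Finset.sum_le_sum_of_ne_zero hcase
    omega
  · push_neg at hcase
    obtain ⟨p₂, hp₂w, hp₂a, hp₂m⟩ := hcase
    have hp₂o : p₂ ∈ Out := by
      rcases hclassify p₂ hp₂w hp₂a with h | h
      · exact absurd h hp₂m
      · exact h
    have hallout : ∀ v ∈ win n r s, a v ≠ 0 → v ∈ Out := by
      intro v hv hva
      rcases hclassify v hv hva with h | h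
      · exact absurd (hnotboth v hv p₂ hp₂w h hp₂o) (fun x => x)
      · exact h
    have h9 : wS (⇑a) (win n r s) ≤ ∑ v ∈ Out, a v :=
      Finset.sum_le_sum_of_ne_zero hallout
    omega

end PairStep

section EdgeSums

/-- `IsEdgeSum G t d` : `d` is a sum of `t` edge indicator vectors of `G`. -/
def IsEdgeSum {V' : Type*} (G : SimpleGraph V') : ℕ → (V' →₀ ℕ) → Prop
  | 0, d => d = 0
  | (t+1), d => ∃ (u q : V') (d' : V' →₀ ℕ), G.Adj u q ∧ IsEdgeSum G t d' ∧
      d = d' + Finsupp.single u 1 + Finsupp.single q 1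

lemma wS_decomp {V' : Type*} [Fintype V'] [DecidableEq V'] (c b : V' →₀ ℕ) (u q : V')
    (h : c = b + Finsupp.single u 1 + Finsupp.single q 1) (X : Finset V') :
    wS (⇑c) X
      = wS (⇑b) X + (if u ∈ X then 1 else 0) + (if q ∈ X then 1 else 0) := by
  classical
  subst h
  have h1 : ∀ (w : V'), (∑ v ∈ X, (Finsupp.single w 1 : V' →₀ ℕ) v) = (if w ∈ X then 1 else 0) := by
    intro w
    simp only [Finsupp.single_apply]
    rw [Finset.sum_ite_eq]
  simp only [wS, Finsupp.coe_add, Pi.add_apply]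
  rw [Finset.sum_add_distrib, Finset.sum_add_distrib, h1 u, h1 q]

lemma pairing (n r : ℕ) [NeZero n] (hr2 : 2*r + 2 ≤ n) :
    ∀ (t : ℕ) (a : ZMod n →₀ ℕ), (∑ v, a v) = 2 * t →
      (∀ s : ZMod n, wS (⇑a) (win n r s) ≤ t) → IsEdgeSum (Gnr n r) t a := by
  intro t
  induction t with
  | zero =>
    intro a ha _
    have hz : a = 0 := by
      ext v
      have h0 : a v = 0 := by
        by_contra hv
        have h1 : 0 < ∑ w, a w :=
          lt_of_lt_of_le (Nat.pos_of_ne_zero hv)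
            (Finset.single_le_sum (fun i _ => Nat.zero_le _) (Finset.mem_univ v))
        omega
      simpa using h0
    show IsEdgeSum (Gnr n r) 0 a
    simpa [IsEdgeSum] using hz
  | succ t ih =>
    intro a ha hwin
    obtain ⟨u, q, hadj, hau, haq, hkey⟩ := pair_step n r hr2 (t+1) (by omega) a ha hwin
    have huq : u ≠ q := hadj.ne
    have hle : Finsupp.single u 1 + Finsupp.single q 1 ≤ a := by
      rw [Finsupp.le_iff]
      intro v _
      simp only [Finsupp.add_apply, Finsupp.single_apply]
      rcases eq_or_ne u v with rfl | hvu
      · rw [if_pos rfl, if_neg (fun h => huq h.symm)]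
        omega
      · rw [if_neg hvu]
        rcases eq_or_ne q v with rfl | hvq
        · rw [if_pos rfl]
          omega
        · rw [if_neg hvq]
          omega
    set a' := a - (Finsupp.single u 1 + Finsupp.single q 1) with ha'
    have hdecomp : a = a' + Finsupp.single u 1 + Finsupp.single q 1 := by
      rw [ha', add_assoc]
      exact (tsub_add_cancel_of_le hle).symm
    have hsum' : (∑ v, a' v) = 2 * t := by
      have h2 := wS_decomp a a' u q hdecomp Finset.univ
      rw [if_pos (Finset.mem_univ u), if_pos (Finset.mem_univ q)] at h2
      have h3 : wS (⇑a) Finset.univ = ∑ v, a v := rfl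
      have h4 : wS (⇑a') Finset.univ = ∑ v, a' v := rfl
      omega
    have hwin' : ∀ s : ZMod n, wS (⇑a') (win n r s) ≤ t := by
      intro s
      have h2 := wS_decomp a a' u q hdecomp (win n r s)
      have h3 := hwin s
      by_cases hu : u ∈ win n r s
      · by_cases hq2 : q ∈ win n r s
        · rw [if_pos hu, if_pos hq2] at h2
          omega
        · rw [if_pos hu, if_neg hq2] at h2
          omega
      · by_cases hq2 : q ∈ win n r s
        · rw [if_neg hu, if_pos hq2] at h2
          omega
        · rw [if_neg hu, if_neg hq2] at h2
          have h4 := hkey s hu hq2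
          omega
    exact ⟨u, q, a', hadj, ih a' hsum' hwin', hdecomp⟩

theorem core_exists (n r : ℕ) [NeZero n] (hr2 : 2*r + 2 ≤ n) :
    ∀ (D t : ℕ) (a : ZMod n →₀ ℕ), (∑ v, a v) = D → 2 * t ≤ D →
      (∀ S : Finset (ZMod n), IndepF (Gnr n r) S → wS (⇑a) S + t ≤ D) →
      ∃ d : ZMod n →₀ ℕ, IsEdgeSum (Gnr n r) t d ∧ d ≤ a := by
  intro D
  induction D using Nat.strong_induction_on with
  | _ D ih =>
    intro t a hsum h2t hind
    rcases Nat.eq_zero_or_pos t with rfl | ht1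
    · refine ⟨0, ?_, zero_le⟩
      show IsEdgeSum (Gnr n r) 0 0
      simp [IsEdgeSum]
    rcases eq_or_lt_of_le h2t with hD2t | hDgt
    · -- D = 2t : use the pairing lemma
      have hwin : ∀ s : ZMod n, wS (⇑a) (win n r s) ≤ t := by
        intro s
        have := hind (win n r s) (win_indep n r hr2 s)
        omega
      exact ⟨a, pairing n r hr2 t a (by omega) hwin, le_refl a⟩
    · -- D > 2t : remove one token lying in all maximum independent sets
      have hp : ∃ p : ZMod n, 0 < a p ∧
          ∀ S : Finset (ZMod n), IndepF (Gnr n r) S → wS (⇑a) S + t = D → p ∈ S := by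
        by_cases hex : ∃ S : Finset (ZMod n), IndepF (Gnr n r) S ∧ wS (⇑a) S + t = D
        · obtain ⟨S₁, hS₁, hS₁W⟩ := hex
          obtain ⟨p, hp1, hp2⟩ := hhs_core (G := Gnr n r) (⇑a) (D - t)
            (fun S hS => by have := hind S hS; omega)
            ⟨S₁, hS₁, by omega⟩
            (by omega)
          exact ⟨p, hp1, fun S hS hSW => hp2 S hS (by omega)⟩
        · push_neg at hex
          have hpos : ∃ p, 0 < a p := by
            by_contra hcon
            push_neg at hcon
            have : ∑ v, a v = 0 := Finset.sum_eq_zero (fun v _ => Nat.le_zero.mp (hcon v))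
            omega
          obtain ⟨p, hp⟩ := hpos
          exact ⟨p, hp, fun S hS hSW => absurd hSW (hex S hS)⟩
      obtain ⟨p, hap, hptight⟩ := hp
      have hle1 : Finsupp.single p 1 ≤ a := by
        rw [Finsupp.le_iff]
        intro v _
        simp only [Finsupp.single_apply]
        rcases eq_or_ne p v with rfl | hv
        · rw [if_pos rfl]
          omega
        · rw [if_neg hv]
          omega
      set a' := a - Finsupp.single p 1 with ha'
      have hdec : a = a' + Finsupp.single p 1 := (tsub_add_cancel_of_le hle1).symm
      have hwX : ∀ X : Finset (ZMod n),
          wS (⇑a) X = wS (⇑a') X + (if p ∈ X then 1 else 0) := by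
        intro X
        have h1 : (∑ v ∈ X, (Finsupp.single p 1 : ZMod n →₀ ℕ) v) = (if p ∈ X then 1 else 0) := by
          simp only [Finsupp.single_apply]
          rw [Finset.sum_ite_eq]
        calc wS (⇑a) X = ∑ v ∈ X, (a' v + (Finsupp.single p 1 : ZMod n →₀ ℕ) v) := by
              apply Finset.sum_congr rfl
              intro v _
              rw [hdec]
              simp [Finsupp.add_apply]
          _ = wS (⇑a') X + (if p ∈ X then 1 else 0) := by
              rw [Finset.sum_add_distrib, h1]
              rfl
      have hsum' : (∑ v, a' v) = D - 1 := by
        have h2 := hwX Finset.univ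
        rw [if_pos (Finset.mem_univ p)] at h2
        have h3 : wS (⇑a) Finset.univ = ∑ v, a v := rfl
        have h4 : wS (⇑a') Finset.univ = ∑ v, a' v := rfl
        omega
      have hind' : ∀ S, IndepF (Gnr n r) S → wS (⇑a') S + t ≤ D - 1 := by
        intro S hS
        have h1 := hind S hS
        have h2 := hwX S
        by_cases hpS : p ∈ S
        · rw [if_pos hpS] at h2
          omega
        · rw [if_neg hpS] at h2
          have h3 : wS (⇑a) S + t ≠ D := fun hc => hpS (hptight S hS hc)
          omega
      obtain ⟨d, hd1, hd2⟩ := ih (D - 1) (by omega) t a' hsum' (by omega) hind'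
      exact ⟨d, hd1, le_trans hd2 tsub_le_self⟩

end EdgeSums

section Translate
variable {V : Type*} [Fintype V] [DecidableEq V] {G : SimpleGraph V}

lemma exists_maximal_indep (S : Finset V) (hS : IndepF G S) :
    ∃ T : Finset V, S ⊆ T ∧ IndepF G T ∧ ∀ x, x ∉ T → ¬ IndepF G (insert x T) := by
  classical
  obtain ⟨T, hTmem, hTmax⟩ :=
    (Finset.univ.powerset.filter (fun T => S ⊆ T ∧ IndepF G T)).exists_max_image
      Finset.card ⟨S, by simp [hS]⟩
  rw [Finset.mem_filter] at hTmem
  refine ⟨T, hTmem.2.1, hTmem.2.2, ?_⟩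
  intro x hx hind
  have hmem : insert x T ∈ Finset.univ.powerset.filter (fun T => S ⊆ T ∧ IndepF G T) := by
    rw [Finset.mem_filter]
    exact ⟨by simp, subset_trans hTmem.2.1 (Finset.subset_insert x T), hind⟩
  have := hTmax _ hmem
  rw [Finset.card_insert_of_notMem hx] at this
  omega

lemma compl_maximal_is_min_cover (T : Finset V) (hT : IndepF G T)
    (hmax : ∀ x, x ∉ T → ¬ IndepF G (insert x T)) :
    IsMinVertexCover G (Finset.univ \ T) := by
  constructor
  · intro u v hadj
    by_contra hcon
    push_neg at hcon
    have hu : u ∈ T := by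
      have := hcon.1
      simp only [Finset.mem_sdiff, Finset.mem_univ, true_and, not_not] at this
      exact this
    have hv : v ∈ T := by
      have := hcon.2
      simp only [Finset.mem_sdiff, Finset.mem_univ, true_and, not_not] at this
      exact this
    exact hT u hu v hv hadj
  · intro D hD hDcov
    by_contra hne
    have hssub : ∃ x ∈ Finset.univ \ T, x ∉ D := by
      by_contra hcon
      push_neg at hcon
      exact hne (Finset.Subset.antisymm hD (fun x hx => hcon x hx))
    obtain ⟨x, hx, hxD⟩ := hssub
    have hxT : x ∉ T := (Finset.mem_sdiff.mp hx).2
    apply hmax x hxT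
    intro u hu v hv hadj
    have hTD : ∀ w ∈ insert x T, w ∉ D := by
      intro w hw
      rcases Finset.mem_insert.mp hw with rfl | hw'
      · exact hxD
      · intro hwD
        exact (Finset.mem_sdiff.mp (hD hwD)).2 hw'
    rcases hDcov hadj with h | h
    · exact hTD u hu h
    · exact hTD v hv h

lemma hind_of_covers (a : V → ℕ) (t : ℕ)
    (hcov : ∀ C : Finset V, IsMinVertexCover G C → t ≤ ∑ i ∈ C, a i) :
    ∀ S : Finset V, IndepF G S → wS a S + t ≤ ∑ v, a v := by
  intro S hS
  obtain ⟨T, hST, hT, hTmax⟩ := exists_maximal_indep S hS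
  have h1 := hcov _ (compl_maximal_is_min_cover T hT hTmax)
  have h2 : (∑ i ∈ Finset.univ \ T, a i) + wS a T = ∑ v, a v := by
    simp only [wS]
    exact Finset.sum_sdiff (Finset.subset_univ T)
  have h3 : wS a S ≤ wS a T := Finset.sum_le_sum_of_subset hST
  omega

lemma isEdgeSum_degree : ∀ (t : ℕ) (d : V →₀ ℕ), IsEdgeSum G t d →
    (d.sum fun _ e => e) = 2 * t := by
  intro t
  induction t with
  | zero =>
    intro d hd
    have : d = 0 := hd
    subst this
    simp
  | succ t ih =>
    intro d hd
    obtain ⟨u, q, d', hadj, hd', rfl⟩ := hd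
    rw [Finsupp.sum_add_index' (fun _ => rfl) (fun _ _ _ => rfl),
        Finsupp.sum_add_index' (fun _ => rfl) (fun _ _ _ => rfl),
        Finsupp.sum_single_index rfl, Finsupp.sum_single_index rfl, ih d' hd']
    ring

lemma isEdgeSum_cover (C : Finset V) (hC : IsVertexCover G C) :
    ∀ (t : ℕ) (d : V →₀ ℕ), IsEdgeSum G t d → t ≤ ∑ i ∈ C, d i := by
  intro t
  induction t with
  | zero => intro d _; exact Nat.zero_le _
  | succ t ih =>
    intro d hd
    obtain ⟨u, q, d', hadj, hd', rfl⟩ := hd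
    have h3 : ∀ (w : V), (∑ i ∈ C, (Finsupp.single w 1 : V →₀ ℕ) i)
        = (if w ∈ C then 1 else 0) := by
      intro w
      simp only [Finsupp.single_apply]
      rw [Finset.sum_ite_eq]
    have h4 := ih d' hd'
    simp only [Finsupp.coe_add, Pi.add_apply]
    rw [Finset.sum_add_distrib, Finset.sum_add_distrib, h3 u, h3 q]
    rcases hC hadj with h | h
    · rw [if_pos h]
      omega
    · rw [if_pos h]
      omega

end Translate

section Algebra
variable {k : Type*} [Field k] {V : Type*}

lemma monomial_span_mul (A B : Set (V →₀ ℕ)) :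
    Ideal.span ((fun d => monomial d (1:k)) '' A) * Ideal.span ((fun d => monomial d (1:k)) '' B)
      = Ideal.span ((fun d => monomial d (1:k)) '' (A + B)) := by
  rw [Ideal.span_mul_span']
  congr 1
  ext p
  constructor
  · rintro ⟨x, hx, y, hy, rfl⟩
    obtain ⟨dx, hdx, rfl⟩ := hx
    obtain ⟨dy, hdy, rfl⟩ := hy
    refine ⟨dx + dy, Set.add_mem_add hdx hdy, ?_⟩
    show monomial (dx + dy) (1:k) = monomial dx (1:k) * monomial dy (1:k)
    rw [monomial_mul, one_mul]
  · rintro ⟨d, hd, rfl⟩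
    obtain ⟨dx, hdx, dy, hdy, rfl⟩ := Set.mem_add.mp hd
    refine ⟨monomial dx 1, ⟨dx, hdx, rfl⟩, monomial dy 1, ⟨dy, hdy, rfl⟩, ?_⟩
    show monomial dx (1:k) * monomial dy (1:k) = monomial (dx + dy) (1:k)
    rw [monomial_mul, one_mul]

lemma monomial_span_top : Ideal.span ((fun d => monomial d (1:k)) '' {(0 : V →₀ ℕ)}) = ⊤ := by
  rw [Set.image_singleton]
  have : (monomial (0 : V →₀ ℕ) (1:k)) = 1 := by
    rw [monomial_zero']
    exact C_1
  rw [this, Ideal.span_singleton_one]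

lemma edgeIdeal_eq_span (G : SimpleGraph V) :
    edgeIdeal k G = Ideal.span ((fun d => monomial d (1:k)) ''
      {d | ∃ u q : V, G.Adj u q ∧ d = Finsupp.single u 1 + Finsupp.single q 1}) := by
  unfold edgeIdeal
  congr 1
  ext p
  constructor
  · rintro ⟨u, q, hadj, rfl⟩
    refine ⟨Finsupp.single u 1 + Finsupp.single q 1, ⟨u, q, hadj, rfl⟩, ?_⟩
    show monomial (Finsupp.single u 1 + Finsupp.single q 1) (1:k) = X u * X q
    rw [show (X u : MvPolynomial V k) = monomial (Finsupp.single u 1) 1 from rfl,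
        show (X q : MvPolynomial V k) = monomial (Finsupp.single q 1) 1 from rfl,
        monomial_mul, one_mul]
  · rintro ⟨d, ⟨u, q, hadj, rfl⟩, rfl⟩
    refine ⟨u, q, hadj, ?_⟩
    show monomial (Finsupp.single u 1 + Finsupp.single q 1) (1:k) = X u * X q
    rw [show (X u : MvPolynomial V k) = monomial (Finsupp.single u 1) 1 from rfl,
        show (X q : MvPolynomial V k) = monomial (Finsupp.single q 1) 1 from rfl,
        monomial_mul, one_mul]

lemma edgeIdeal_pow_eq_span (G : SimpleGraph V) (t : ℕ) :
    (edgeIdeal k G) ^ t = Ideal.span ((fun d => monomial d (1:k)) ''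
      {d | IsEdgeSum G t d}) := by
  induction t with
  | zero =>
    have hset : {d : V →₀ ℕ | IsEdgeSum G 0 d} = {0} := by
      ext d
      show IsEdgeSum G 0 d ↔ d ∈ ({0} : Set (V →₀ ℕ))
      exact ⟨fun h => h, fun h => h⟩
    rw [pow_zero, Ideal.one_eq_top, hset]
    exact monomial_span_top.symm
  | succ t ih =>
    have hset : {d : V →₀ ℕ | IsEdgeSum G t d}
        + {d : V →₀ ℕ | ∃ u q : V, G.Adj u q ∧ d = Finsupp.single u 1 + Finsupp.single q 1}
        = {d : V →₀ ℕ | IsEdgeSum G (t+1) d} := by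
      ext d
      constructor
      · intro hd
        obtain ⟨x, hx, y, hy, rfl⟩ := Set.mem_add.mp hd
        obtain ⟨u, q, hadj, rfl⟩ := hy
        exact ⟨u, q, x, hadj, hx, by rw [add_assoc]⟩
      · rintro ⟨u, q, d', hadj, hd', rfl⟩
        rw [add_assoc]
        exact Set.add_mem_add hd' ⟨u, q, hadj, rfl⟩
    rw [pow_succ, ih, edgeIdeal_eq_span, monomial_span_mul, hset]

lemma coverPrime_eq_span (C : Finset V) :
    coverPrime k C = Ideal.span ((fun d => monomial d (1:k)) ''
      {d | ∃ i ∈ C, d = Finsupp.single i 1}) := by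
  unfold coverPrime
  congr 1
  ext p
  constructor
  · rintro ⟨i, hi, rfl⟩
    exact ⟨Finsupp.single i 1, ⟨i, hi, rfl⟩, rfl⟩
  · rintro ⟨d, ⟨i, hi, rfl⟩, rfl⟩
    exact ⟨i, hi, rfl⟩

lemma coverPrime_pow_eq_span [Fintype V] [DecidableEq V] (C : Finset V) (t : ℕ) :
    (coverPrime k C) ^ t = Ideal.span ((fun d => monomial d (1:k)) ''
      {d | d.support ⊆ C ∧ (d.sum fun _ e => e) = t}) := by
  induction t with
  | zero =>
    have hset : {d : V →₀ ℕ | d.support ⊆ C ∧ (d.sum fun _ e => e) = 0} = {0} := by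
      ext d
      simp only [Set.mem_setOf_eq, Set.mem_singleton_iff]
      constructor
      · rintro ⟨_, hsum⟩
        have hz : ∀ v, d v = 0 := by
          intro v
          by_contra hv
          have h1 : 0 < d.sum fun _ e => e := by
            rw [Finsupp.sum]
            have hvs : v ∈ d.support := Finsupp.mem_support_iff.mpr hv
            exact lt_of_lt_of_le (Nat.pos_of_ne_zero hv)
              (Finset.single_le_sum (fun i _ => Nat.zero_le _) hvs)
          omega
        ext v
        simp [hz v]
      · rintro rfl
        exact ⟨by simp, by simp⟩
    rw [pow_zero, Ideal.one_eq_top, hset]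
    exact monomial_span_top.symm
  | succ t ih =>
    have hset : {d : V →₀ ℕ | d.support ⊆ C ∧ (d.sum fun _ e => e) = t}
        + {d : V →₀ ℕ | ∃ i ∈ C, d = Finsupp.single i 1}
        = {d : V →₀ ℕ | d.support ⊆ C ∧ (d.sum fun _ e => e) = t + 1} := by
      ext d
      constructor
      · intro hd
        obtain ⟨x, hx, y, hy, rfl⟩ := Set.mem_add.mp hd
        obtain ⟨i, hiC, rfl⟩ := hy
        constructor
        · refine subset_trans Finsupp.support_add ?_
          apply Finset.union_subset hx.1
          refine subset_trans Finsupp.support_single_subset ?_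
          simpa using hiC
        · rw [Finsupp.sum_add_index' (fun _ => rfl) (fun _ _ _ => rfl),
            Finsupp.sum_single_index rfl, hx.2]
      · rintro ⟨hsupp, hsum⟩
        have hne : d.support.Nonempty := by
          by_contra hcon
          rw [Finset.not_nonempty_iff_eq_empty] at hcon
          rw [Finsupp.sum, hcon] at hsum
          simp at hsum
        obtain ⟨i, hi⟩ := hne
        have hile : Finsupp.single i 1 ≤ d := by
          rw [Finsupp.le_iff]
          intro v _
          simp only [Finsupp.single_apply]
          rcases eq_or_ne i v with rfl | hv
          · rw [if_pos rfl]
            have := Finsupp.mem_support_iff.mp hi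
            omega
          · rw [if_neg hv]
            omega
        have hdec : d = (d - Finsupp.single i 1) + Finsupp.single i 1 :=
          (tsub_add_cancel_of_le hile).symm
        rw [hdec]
        apply Set.add_mem_add
        · constructor
          · refine subset_trans ?_ hsupp
            intro v hv
            rw [Finsupp.mem_support_iff] at hv ⊢
            intro hcon
            apply hv
            have h5 := Finsupp.le_def.mp (tsub_le_self (a := d) (b := Finsupp.single i 1)) v
            omega
          · have h6 : (d.sum fun _ e => e)
                = ((d - Finsupp.single i 1).sum fun _ e => e)
                  + ((Finsupp.single i 1 : V →₀ ℕ).sum fun _ e => e) := by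
              conv_lhs => rw [hdec]
              rw [Finsupp.sum_add_index' (fun _ => rfl) (fun _ _ _ => rfl)]
            rw [Finsupp.sum_single_index rfl] at h6
            omega
        · exact ⟨i, hsupp hi, rfl⟩
    rw [pow_succ, ih, coverPrime_eq_span, monomial_span_mul, hset]

lemma monomial_mem_span_iff (s : Set (V →₀ ℕ)) (a : V →₀ ℕ) :
    (monomial a (1:k)) ∈ Ideal.span ((fun d => monomial d (1:k)) '' s) ↔ ∃ d ∈ s, d ≤ a := by
  classical
  rw [mem_ideal_span_monomial_image]
  have hsupp : (monomial a (1:k)).support = {a} := by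
    rw [support_monomial, if_neg one_ne_zero]
  rw [hsupp]
  simp

end Algebra

section Glue
variable {k : Type*} [Field k]

lemma exists_le_deg {V : Type*} [DecidableEq V] (a : V →₀ ℕ) (C : Finset V) :
    ∀ t : ℕ, t ≤ ∑ i ∈ C, a i →
      ∃ d : V →₀ ℕ, d ≤ a ∧ d.support ⊆ C ∧ (d.sum fun _ e => e) = t := by
  intro t
  induction t with
  | zero =>
    intro _
    exact ⟨0, zero_le, by simp, by simp⟩
  | succ t ih =>
    intro h
    obtain ⟨d, hd1, hd2, hd3⟩ := ih (by omega)
    have hex : ∃ i ∈ C, d i < a i := by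
      by_contra hcon
      push_neg at hcon
      have h1 : ∑ i ∈ C, a i ≤ ∑ i ∈ C, d i := Finset.sum_le_sum hcon
      have h2 : (∑ i ∈ C, d i) ≤ (d.sum fun _ e => e) := by
        rw [Finsupp.sum]
        apply Finset.sum_le_sum_of_ne_zero
        intro x _ hx
        exact Finsupp.mem_support_iff.mpr hx
      omega
    obtain ⟨i, hiC, hlt⟩ := hex
    refine ⟨d + Finsupp.single i 1, ?_, ?_, ?_⟩
    · rw [Finsupp.le_def]
      intro v
      have h4 := Finsupp.le_def.mp hd1 v
      simp only [Finsupp.add_apply, Finsupp.single_apply]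
      rcases eq_or_ne i v with rfl | hv
      · rw [if_pos rfl]
        omega
      · rw [if_neg hv]
        omega
    · refine subset_trans Finsupp.support_add ?_
      apply Finset.union_subset hd2
      refine subset_trans Finsupp.support_single_subset ?_
      simpa using hiC
    · rw [Finsupp.sum_add_index' (fun _ => rfl) (fun _ _ _ => rfl),
        Finsupp.sum_single_index rfl, hd3]

lemma monomial_mem_coverPrime_pow_iff {V : Type*} [Fintype V] [DecidableEq V]
    (C : Finset V) (t : ℕ) (a : V →₀ ℕ) :
    monomial a (1:k) ∈ (coverPrime k C) ^ t ↔ t ≤ ∑ i ∈ C, a i := by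
  rw [coverPrime_pow_eq_span, monomial_mem_span_iff]
  constructor
  · rintro ⟨d, ⟨hsupp, hdeg⟩, hle⟩
    have h1 : (d.sum fun _ e => e) = ∑ i ∈ C, d i :=
      Finsupp.sum_of_support_subset d hsupp _ (fun _ _ => rfl)
    have h2 : ∑ i ∈ C, d i ≤ ∑ i ∈ C, a i :=
      Finset.sum_le_sum (fun i _ => Finsupp.le_def.mp hle i)
    omega
  · intro h
    obtain ⟨d, hd1, hd2, hd3⟩ := exists_le_deg a C t h
    exact ⟨d, ⟨hd2, hd3⟩, hd1⟩

lemma monomial_mem_symbPow_iff {V : Type*} [Fintype V] [DecidableEq V]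
    (G : SimpleGraph V) (t : ℕ) (a : V →₀ ℕ) :
    monomial a (1:k) ∈ symbPow k G t ↔
      ∀ C : Finset V, IsMinVertexCover G C → t ≤ ∑ i ∈ C, a i := by
  unfold symbPow
  rw [Ideal.mem_iInf]
  apply forall_congr'
  intro C
  rw [Ideal.mem_iInf]
  apply forall_congr'
  intro _
  exact monomial_mem_coverPrime_pow_iff C t a

lemma main_core (n r t : ℕ) (hn : 2 ≤ n) (hr : r ≤ n / 2 - 1)
    (a : ZMod n →₀ ℕ)
    (hcov : ∀ C : Finset (ZMod n), IsMinVertexCover (Gnr n r) C → t ≤ ∑ i ∈ C, a i)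
    (hdeg : 2 * t ≤ a.sum (fun _ e => e)) :
    monomial a (1 : k) ∈ (edgeIdeal k (Gnr n r)) ^ t := by
  haveI : NeZero n := ⟨by omega⟩
  have hr2 : 2 * r + 2 ≤ n := by omega
  have hbridge : (a.sum fun _ e => e) = ∑ v, a v := Finsupp.sum_fintype _ _ (fun _ => rfl)
  have hind := hind_of_covers (G := Gnr n r) (⇑a) t hcov
  obtain ⟨d, hd1, hd2⟩ := core_exists n r hr2 (∑ v, a v) t a rfl (by omega)
    (fun S hS => hind S hS)
  rw [edgeIdeal_pow_eq_span, monomial_mem_span_iff]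
  exact ⟨d, hd1, hd2⟩

end Glue

/-- Every monomial `x^a ∈ I^{(t)}` of degree at least `2t` lies in `I^t`;
equivalently, `I^t` is generated by the set `L(t)` of monomials of degree `≥ 2t` whose
weight on every minimal vertex cover is at least `t`. Here `I = I(G_{n,r})`. -/
theorem stmt11 {k : Type*} [Field k] (n r t : ℕ) (hn : 2 ≤ n) (hr : r ≤ n / 2 - 1)
    (ht : 1 ≤ t) :
    (∀ a : ZMod n →₀ ℕ, monomial a (1 : k) ∈ symbPow k (Gnr n r) t →
      2 * t ≤ a.sum (fun _ e => e) → monomial a (1 : k) ∈ (edgeIdeal k (Gnr n r)) ^ t) ∧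
    (edgeIdeal k (Gnr n r)) ^ t = Ideal.span {p : MvPolynomial (ZMod n) k |
      ∃ a : ZMod n →₀ ℕ, p = monomial a (1 : k) ∧ 2 * t ≤ a.sum (fun _ e => e) ∧
        ∀ C : Finset (ZMod n), IsMinVertexCover (Gnr n r) C → t ≤ ∑ i ∈ C, a i} := by
  haveI : NeZero n := ⟨by omega⟩
  constructor
  · intro a hmem hdeg
    exact main_core n r t hn hr a
      (fun C hC => (monomial_mem_symbPow_iff (Gnr n r) t a).mp hmem C hC) hdeg
  · apply le_antisymm
    · rw [edgeIdeal_pow_eq_span]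
      apply Ideal.span_le.mpr
      rintro p ⟨d, hd, rfl⟩
      apply Ideal.subset_span
      refine ⟨d, rfl, ?_, ?_⟩
      · have := isEdgeSum_degree (G := Gnr n r) t d hd
        omega
      · intro C hC
        exact isEdgeSum_cover C hC.1 t d hd
    · apply Ideal.span_le.mpr
      rintro p ⟨a, rfl, hdeg, hcov⟩
      exact main_core n r t hn hr a hcov hdeg
end

section
/- For the edge ideal I = I(G_{n,r}), the least generating degree of the t-th symbolic power satisfies α(I^{(t)}) ≥ ⌈ n t / (n - (r+1)) ⌉ for every t ≥ 1. -/
open MvPolynomial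

/-! ### Auxiliary results -/

/-- The ideal of polynomials all of whose monomials have `C`-weight at least `t`. -/
noncomputable def Jid (k : Type*) [Field k] {V : Type*} [DecidableEq V] (C : Finset V) (t : ℕ) :
    Ideal (MvPolynomial V k) where
  carrier := {p | ∀ d ∈ p.support, t ≤ ∑ i ∈ C, d i}
  zero_mem' := by simp
  add_mem' := by
    intro a b ha hb d hd
    rcases Finset.mem_union.mp (MvPolynomial.support_add hd) with h | h
    exacts [ha d h, hb d h]
  smul_mem' := by
    intro c p hp d hd
    rw [smul_eq_mul] at hd
    obtain ⟨d1, _, d2, hd2, rfl⟩ := Finset.mem_add.mp (MvPolynomial.support_mul _ _ hd)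
    have h2 := hp d2 hd2
    have : ∑ i ∈ C, d2 i ≤ ∑ i ∈ C, (d1 + d2) i := by
      refine Finset.sum_le_sum fun i _ => ?_
      simp [Finsupp.add_apply]
    omega

lemma Jid_mul {k : Type*} [Field k] {V : Type*} [DecidableEq V] (C : Finset V) (s t : ℕ) :
    Jid k C s * Jid k C t ≤ Jid k C (s + t) := by
  rw [Ideal.mul_le]
  intro p hp q hq d hd
  obtain ⟨d1, hd1, d2, hd2, rfl⟩ := Finset.mem_add.mp (MvPolynomial.support_mul _ _ hd)
  have h1 := hp d1 hd1
  have h2 := hq d2 hd2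
  have : ∑ i ∈ C, (d1 + d2) i = ∑ i ∈ C, d1 i + ∑ i ∈ C, d2 i := by
    rw [← Finset.sum_add_distrib]; rfl
  omega

lemma coverPrime_le_Jid {k : Type*} [Field k] {V : Type*} [DecidableEq V] (C : Finset V) :
    coverPrime k C ≤ Jid k C 1 := by
  rw [coverPrime, Ideal.span_le]
  rintro _ ⟨i, hi, rfl⟩ d hd
  rw [MvPolynomial.support_X, Finset.mem_singleton] at hd
  subst hd
  have : ∑ j ∈ C, (Finsupp.single i 1 : V →₀ ℕ) j = 1 := by
    rw [Finset.sum_congr rfl (fun j _ => Finsupp.single_apply (a := i) (b := 1) (a' := j)),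
      Finset.sum_ite_eq]
    simp [Finset.mem_coe.mp hi]
  omega

lemma coverPrime_pow_le_Jid {k : Type*} [Field k] {V : Type*} [DecidableEq V] (C : Finset V)
    (t : ℕ) : coverPrime k C ^ t ≤ Jid k C t := by
  induction t with
  | zero => intro p _ d _; exact Nat.zero_le _
  | succ t ih =>
    calc coverPrime k C ^ (t + 1) = coverPrime k C ^ t * coverPrime k C := pow_succ _ _
      _ ≤ Jid k C t * Jid k C 1 := mul_le_mul' ih (coverPrime_le_Jid C)
      _ ≤ Jid k C (t + 1) := Jid_mul C t 1

/-- Every vertex cover contains a minimal vertex cover. -/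
lemma exists_min_cover {V : Type*} (G : SimpleGraph V) (C : Finset V)
    (hC : IsVertexCover G C) : ∃ D ⊆ C, IsMinVertexCover G D := by
  induction C using Finset.strongInductionOn with
  | _ C ih =>
    by_cases h : ∀ D ⊆ C, IsVertexCover G D → D = C
    · exact ⟨C, subset_rfl, hC, h⟩
    · push_neg at h
      obtain ⟨D, hDC, hDcov, hne⟩ := h
      obtain ⟨E, hED, hE⟩ := ih D (hDC.ssubset_of_ne hne) hDcov
      exact ⟨E, hED.trans hDC, hE⟩

lemma sub_val_cases {n : ℕ} [NeZero n] (x y : ZMod n) :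
    (y.val ≤ x.val ∧ (x - y).val = x.val - y.val) ∨
      (x.val < y.val ∧ (x - y).val = n + x.val - y.val) := by
  have hx := ZMod.val_lt x
  have hy := ZMod.val_lt y
  rcases le_or_gt y.val x.val with h | h
  · refine Or.inl ⟨h, ?_⟩
    have hxy : ((x.val - y.val : ℕ) : ZMod n) = x - y := by
      rw [Nat.cast_sub h]
      simp [ZMod.natCast_val, ZMod.cast_id]
    rw [← hxy, ZMod.val_cast_of_lt (by omega)]
  · refine Or.inr ⟨h, ?_⟩
    have hxy : ((n + x.val - y.val : ℕ) : ZMod n) = x - y := by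
      rw [Nat.cast_sub (by omega)]
      push_cast
      simp [ZMod.natCast_val, ZMod.cast_id, ZMod.natCast_self]
    rw [← hxy, ZMod.val_cast_of_lt (by omega)]

lemma adj_diff {n r : ℕ} [NeZero n] {a b : ZMod n} (h : (Gnr n r).Adj a b) :
    (r + 1 ≤ (b - a).val ∧ (b - a).val ≤ n - (r + 1)) ∨
      (r + 1 ≤ (a - b).val ∧ (a - b).val ≤ n - (r + 1)) := by
  rw [Gnr, SimpleGraph.fromRel_adj] at h
  obtain ⟨-, h | h⟩ := h
  · left
    rcases sub_val_cases b a with ⟨h1, h2⟩ | ⟨h1, h2⟩ <;> omega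
  · right
    rcases sub_val_cases a b with ⟨h1, h2⟩ | ⟨h1, h2⟩ <;> omega

lemma mem_consec {n : ℕ} [NeZero n] {m : ℕ} (hm : m ≤ n) (s v : ZMod n) :
    v ∈ (Finset.range m).image (fun j : ℕ => s + (j : ZMod n)) ↔ (v - s).val < m := by
  constructor
  · intro hv
    obtain ⟨j, hj, rfl⟩ := Finset.mem_image.mp hv
    rw [Finset.mem_range] at hj
    have : s + (j : ZMod n) - s = (j : ZMod n) := by ring
    rw [this, ZMod.val_cast_of_lt (by omega)]
    exact hj
  · intro hv
    refine Finset.mem_image.mpr ⟨(v - s).val, Finset.mem_range.mpr hv, ?_⟩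
    have : ((v - s).val : ZMod n) = v - s := by simp [ZMod.natCast_val, ZMod.cast_id]
    rw [this]; ring

lemma cover_consec {n r : ℕ} [NeZero n] (h2 : 2 * r + 2 ≤ n) (s : ZMod n) :
    IsVertexCover (Gnr n r)
      ((Finset.range (n - (r + 1))).image (fun j : ℕ => s + (j : ZMod n))) := by
  intro a b hab
  by_contra hcon
  push_neg at hcon
  obtain ⟨ha, hb⟩ := hcon
  rw [mem_consec (by omega)] at ha hb
  push_neg at ha hb
  have hA := ZMod.val_lt (a - s)
  have hB := ZMod.val_lt (b - s)
  have hba : b - a = (b - s) - (a - s) := by ring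
  have hab' : a - b = (a - s) - (b - s) := by ring
  rcases adj_diff hab with ⟨h1, h2'⟩ | ⟨h1, h2'⟩
  · rw [hba] at h1 h2'
    rcases sub_val_cases (b - s) (a - s) with ⟨hc1, hc2⟩ | ⟨hc1, hc2⟩ <;> omega
  · rw [hab'] at h1 h2'
    rcases sub_val_cases (a - s) (b - s) with ⟨hc1, hc2⟩ | ⟨hc1, hc2⟩ <;> omega

/-- For `I = I(G_{n,r})`, the least generating degree of the `t`-th symbolic
power satisfies `α(I^{(t)}) ≥ ⌈nt/(n-(r+1))⌉`: every nonzero element of `I^{(t)}` has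
total degree at least `⌈nt/(n-(r+1))⌉`. -/
theorem stmt12 {k : Type*} [Field k] (n r t : ℕ) (hn : 2 ≤ n) (hr : r ≤ n / 2 - 1)
    (ht : 1 ≤ t) (p : MvPolynomial (ZMod n) k) (hp : p ∈ symbPow k (Gnr n r) t)
    (hp0 : p ≠ 0) :
    ⌈((n : ℚ) * t) / ((n : ℚ) - (r + 1))⌉₊ ≤ p.totalDegree := by
  haveI : NeZero n := ⟨by omega⟩
  have h2 : 2 * r + 2 ≤ n := by omega
  set m : ℕ := n - (r + 1) with hm
  have hm1 : 1 ≤ m := by omega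
  -- unpack symbolic power membership
  rw [symbPow] at hp
  simp only [Submodule.mem_iInf] at hp
  -- pick a monomial of p
  obtain ⟨d, hd⟩ : p.support.Nonempty := by
    rw [Finset.nonempty_iff_ne_empty, Ne, MvPolynomial.support_eq_empty]
    exact hp0
  -- each consecutive cover gives weight ≥ t
  set Cov : ZMod n → Finset (ZMod n) :=
    fun s => (Finset.range m).image (fun j : ℕ => s + (j : ZMod n)) with hCov
  have hW : ∀ s : ZMod n, t ≤ ∑ i ∈ Cov s, d i := by
    intro s
    obtain ⟨D, hDsub, hDmin⟩ := exists_min_cover (Gnr n r) (Cov s) (cover_consec h2 s)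
    have hpD : p ∈ Jid k D t := coverPrime_pow_le_Jid D t (hp D hDmin)
    exact le_trans (hpD d hd) (Finset.sum_le_sum_of_subset hDsub)
  -- sum over all rotations
  have hsum : ∀ s : ZMod n, ∑ i ∈ Cov s, d i = ∑ j ∈ Finset.range m, d (s + (j : ZMod n)) := by
    intro s
    refine Finset.sum_image fun x hx y hy hxy => ?_
    rw [Finset.mem_coe, Finset.mem_range] at hx hy
    have : (x : ZMod n) = (y : ZMod n) := by
      have := add_left_cancel hxy
      exact this
    have hxv : ((x : ℕ) : ZMod n).val = x := ZMod.val_cast_of_lt (by omega)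
    have hyv : ((y : ℕ) : ZMod n).val = y := ZMod.val_cast_of_lt (by omega)
    rw [← hxv, ← hyv, this]
  have htotal : n * t ≤ m * ∑ i : ZMod n, d i := by
    have h1 : ∑ _s : ZMod n, t ≤ ∑ s : ZMod n, ∑ i ∈ Cov s, d i :=
      Finset.sum_le_sum fun s _ => hW s
    have h2' : ∑ s : ZMod n, ∑ i ∈ Cov s, d i = m * ∑ i : ZMod n, d i := by
      calc ∑ s : ZMod n, ∑ i ∈ Cov s, d i
          = ∑ s : ZMod n, ∑ j ∈ Finset.range m, d (s + (j : ZMod n)) := by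
            exact Finset.sum_congr rfl fun s _ => hsum s
        _ = ∑ j ∈ Finset.range m, ∑ s : ZMod n, d (s + (j : ZMod n)) := Finset.sum_comm
        _ = ∑ j ∈ Finset.range m, ∑ s : ZMod n, d s := by
            refine Finset.sum_congr rfl fun j _ => ?_
            exact Equiv.sum_comp (Equiv.addRight ((j : ℕ) : ZMod n)) d
        _ = m * ∑ i : ZMod n, d i := by
            rw [Finset.sum_const, Finset.card_range, smul_eq_mul]
    have h3 : ∑ _s : ZMod n, t = n * t := by
      rw [Finset.sum_const, Finset.card_univ, ZMod.card, smul_eq_mul]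
    omega
  -- relate to total degree
  have hdeg : ∑ i : ZMod n, d i ≤ p.totalDegree := by
    refine le_trans ?_ (MvPolynomial.le_totalDegree hd)
    rw [Finsupp.sum]
    refine le_of_eq (Finset.sum_subset (Finset.subset_univ _) fun i _ hi => ?_).symm
    exact Finsupp.notMem_support_iff.mp hi
  have hfinal : n * t ≤ m * p.totalDegree :=
    le_trans htotal (Nat.mul_le_mul_left m hdeg)
  -- conclude with ceiling arithmetic
  have hcast : ((n : ℚ) - (r + 1)) = (m : ℚ) := by
    rw [hm, Nat.cast_sub (by omega)]
    push_cast
    ring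
  rw [hcast, Nat.ceil_le, div_le_iff₀ (by exact_mod_cast hm1)]
  calc ((n : ℚ) * t) ≤ (m * p.totalDegree : ℕ) := by exact_mod_cast hfinal
    _ = (p.totalDegree : ℚ) * m := by push_cast; ring
end

section
/- The Waldschmidt constant of the edge ideal I = I(G_{n,r}) equals n/(n - (r + 1)), i.e., the limit of α(I^{(t)})/t as t → ∞ is n/(n-(r+1)). -/
open MvPolynomial

/-- `α(J)`: the least total degree of a nonzero element of `J`. -/
noncomputable def minDeg {k : Type*} [Field k] {V : Type*} (J : Ideal (MvPolynomial V k)) : ℕ :=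
  sInf {d : ℕ | ∃ p ∈ J, p ≠ 0 ∧ p.totalDegree = d}


section AuxCombinatorics

lemma keyNat (r : ℕ) : ∀ N : ℕ, ∀ S : Finset ℕ, 2*r+2 ≤ N → (∀ x ∈ S, x < N) →
    (∀ x ∈ S, ∀ y ∈ S, x < y → y - x ≤ r ∨ N - r ≤ y - x) → S.card ≤ r + 1 := by
  intro N
  induction N using Nat.strong_induction_on with
  | _ N ih =>
    intro S hN hlt hd
    rcases eq_or_lt_of_le hN with hN' | hN'
    · -- base case N = 2r+2
      have key2 : ∀ x ∈ S, ∀ y ∈ S, x < y → x % (r+1) ≠ y % (r+1) := by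
        intro x hx y hy h hxy
        have hmod : (y - x) % (r+1) = 0 := Nat.sub_mod_eq_zero_of_mod_eq hxy.symm
        obtain ⟨c, hc⟩ := Nat.dvd_of_mod_eq_zero hmod
        have hyN := hlt y hy
        have := hd x hx y hy h
        rcases Nat.lt_or_ge c 2 with h2 | h2
        · interval_cases c <;> omega
        · have := Nat.mul_le_mul_left (r+1) h2
          omega
      have hinj : Set.InjOn (· % (r+1)) S := by
        intro x hx y hy hxy
        rcases lt_trichotomy x y with h | h | h
        · exact absurd hxy (key2 x hx y hy h)
        · exact h
        · exact absurd hxy.symm (key2 y hy x hx h)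
      calc S.card = (S.image (· % (r+1))).card := (Finset.card_image_of_injOn hinj).symm
        _ ≤ (Finset.range (r+1)).card := by
            apply Finset.card_le_card
            intro m hm
            simp only [Finset.mem_image] at hm
            obtain ⟨x, _, rfl⟩ := hm
            simpa using Nat.mod_lt x (show r + 1 > 0 by omega)
        _ = r + 1 := Finset.card_range _
    · -- step
      have hz : ∃ z, z < N ∧ z ∉ S := by
        by_contra h 
        push_neg at h
        have h0 := h 0 (by omega)
        have h1 := h (r+1) (by omega)
        have := hd 0 h0 (r+1) h1 (by omega)
        omega
      obtain ⟨z, hzN, hzS⟩ := hz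
      have hne : ∀ x ∈ S, x ≠ z := fun x hx h => hzS (h ▸ hx)
      set f : ℕ → ℕ := fun x => if x < z then x else x - 1 with hf
      have hinj : Set.InjOn f S := by
        intro x hx y hy hxy
        have hxz := hne x hx; have hyz := hne y hy
        simp only [hf] at hxy
        split_ifs at hxy <;> omega
      rw [← Finset.card_image_of_injOn hinj]
      refine ih (N-1) (by omega) _ (by omega) ?_ ?_
      · intro x' hx'
        simp only [Finset.mem_image] at hx'
        obtain ⟨x, hx, rfl⟩ := hx'
        have := hlt x hx; have hxz := hne x hx
        simp only [hf]; split_ifs <;> omega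
      · intro x' hx' y' hy' hlt'
        simp only [Finset.mem_image] at hx' hy'
        obtain ⟨x, hx, rfl⟩ := hx'
        obtain ⟨y, hy, rfl⟩ := hy'
        have hxz := hne x hx; have hyz := hne y hy
        have hxN := hlt x hx; have hyN := hlt y hy
        have hxy : x < y := by
          by_contra hc
          simp only [hf] at hlt'
          split_ifs at hlt' <;> omega
        have := hd x hx y hy hxy
        simp only [hf] at hlt' ⊢
        split_ifs at hlt' ⊢ <;> omega

section ZModPart


variable {n r : ℕ}

lemma zm_sub_val (hn : 2 ≤ n) {w z : ZMod n} (h : z.val < w.val) :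
    (w - z).val = w.val - z.val ∧ (z - w).val = n - (w.val - z.val) := by
  haveI : NeZero n := ⟨by omega⟩
  have hwlt := ZMod.val_lt w
  have hzlt := ZMod.val_lt z
  have e1 : w - z = ((w.val - z.val : ℕ) : ZMod n) := by
    rw [Nat.cast_sub h.le, ZMod.natCast_val, ZMod.natCast_val, ZMod.cast_id, ZMod.cast_id]
  have e2 : z - w = ((n - (w.val - z.val) : ℕ) : ZMod n) := by
    rw [Nat.cast_sub (by omega), ZMod.natCast_self, Nat.cast_sub h.le, ZMod.natCast_val,
      ZMod.natCast_val, ZMod.cast_id, ZMod.cast_id]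
    ring
  constructor
  · rw [e1, ZMod.val_natCast, Nat.mod_eq_of_lt (by omega)]
  · rw [e2, ZMod.val_natCast, Nat.mod_eq_of_lt (by omega)]

lemma adj_iff (hn : 2*r+2 ≤ n) {u v : ZMod n} :
    (Gnr n r).Adj u v ↔ u ≠ v ∧ (r+1 ≤ (v-u).val ∧ r+1 ≤ (u-v).val) := by
  haveI : NeZero n := ⟨by omega⟩
  rw [Gnr, SimpleGraph.fromRel_adj]
  refine and_congr_right fun hne => ?_
  have hval : u.val ≠ v.val := fun h => hne (ZMod.val_injective n h)
  have hu := ZMod.val_lt u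
  have hv := ZMod.val_lt v
  rcases lt_or_gt_of_ne hval with h | h
  · obtain ⟨h1, h2⟩ := zm_sub_val (by omega) h
    rw [h1, h2]
    omega
  · obtain ⟨h1, h2⟩ := zm_sub_val (by omega) h
    rw [h1, h2]
    omega

lemma indep_card_le (hn : 2*r+2 ≤ n) (S : Finset (ZMod n))
    (h : ∀ u ∈ S, ∀ v ∈ S, ¬ (Gnr n r).Adj u v) : S.card ≤ r + 1 := by
  haveI : NeZero n := ⟨by omega⟩
  have hinj : Set.InjOn ZMod.val S := fun a _ b _ hab => ZMod.val_injective n hab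
  rw [← Finset.card_image_of_injOn hinj]
  refine keyNat r n _ hn ?_ ?_
  · intro x hx
    simp only [Finset.mem_image] at hx
    obtain ⟨u, _, rfl⟩ := hx
    exact ZMod.val_lt u
  · intro x hx y hy hxy
    simp only [Finset.mem_image] at hx hy
    obtain ⟨u, hu, rfl⟩ := hx
    obtain ⟨v, hv, rfl⟩ := hy
    have hne : u ≠ v := fun hh => by rw [hh] at hxy; omega
    have hnadj := h u hu v hv
    rw [adj_iff hn] at hnadj
    obtain ⟨h1, h2⟩ := zm_sub_val (by omega : 2 ≤ n) hxy
    have hvlt := ZMod.val_lt v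
    push_neg at hnadj
    have := hnadj hne
    omega

/-- the complement of the arc `{a, a+1, …, a+r}`. -/
def arcCover (n r : ℕ) [NeZero n] (a : ZMod n) : Finset (ZMod n) :=
  Finset.univ.filter (fun i => r < (i - a).val)

lemma mem_arcCover [NeZero n] {a i : ZMod n} : i ∈ arcCover n r a ↔ r < (i - a).val := by
  simp [arcCover]

lemma arcCover_isMinVertexCover (hn : 2*r+2 ≤ n) [NeZero n] (a : ZMod n) :
    IsMinVertexCover (Gnr n r) (arcCover n r a) := by
  constructor
  · -- vertex cover
    intro u v hadj
    by_contra hcon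
    push_neg at hcon
    obtain ⟨hu, hv⟩ := hcon
    rw [mem_arcCover, not_lt] at hu hv
    rw [adj_iff hn] at hadj
    obtain ⟨hne, ha1, ha2⟩ := hadj
    have hpq : (u - a).val ≠ (v - a).val := by
      intro hh
      exact hne (by have := ZMod.val_injective n hh; 
                    have : u - a + a = v - a + a := by rw [this]
                    simpa using this)
    have huv : v - u = (v - a) - (u - a) := by ring
    have hvu : u - v = (u - a) - (v - a) := by ring
    rcases lt_or_gt_of_ne hpq with h | h
    · obtain ⟨h1, _⟩ := zm_sub_val (by omega : 2 ≤ n) h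
      rw [huv, h1] at ha1
      omega
    · obtain ⟨h1, _⟩ := zm_sub_val (by omega : 2 ≤ n) h
      rw [hvu, h1] at ha2
      omega
  · -- minimality
    intro D hD hcov
    apply Finset.Subset.antisymm hD
    intro v hv
    rw [mem_arcCover] at hv
    set d := (v - a).val with hdd
    have hdlt : d < n := ZMod.val_lt _
    have hvna : v ≠ a := by
      intro hh
      rw [hh] at hdd
      simp [sub_self] at hdd
      omega
    rcases le_or_gt d (n - r - 1) with hcase | hcase
    · -- v adjacent to a
      have hadj : (Gnr n r).Adj v a := by
        rw [adj_iff hn]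
        refine ⟨hvna, ?_, ?_⟩
        · have h0 : a.val ≠ v.val := fun hh => hvna (ZMod.val_injective n hh.symm)
          rcases lt_or_gt_of_ne h0 with h | h
          · obtain ⟨_, h2⟩ := zm_sub_val (by omega : 2 ≤ n) h
            obtain ⟨h1, _⟩ := zm_sub_val (by omega : 2 ≤ n) h
            rw [← hdd] at h1
            rw [h2]
            omega
          · obtain ⟨h1, h2⟩ := zm_sub_val (by omega : 2 ≤ n) h
            rw [← hdd] at h2
            rw [h1]
            omega
        · rw [← hdd]; omega
      rcases hcov hadj with h | h
      · exact h
      · exfalso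
        have := hD h
        rw [mem_arcCover] at this
        simp [sub_self] at this
    · -- v adjacent to w = a + (d - (n-r-1))
      set s := d - (n - r - 1) with hss
      have hs1 : 1 ≤ s := by omega
      have hsr : s ≤ r := by omega
      set w := a + (s : ZMod n) with hww
      have hwa : (w - a).val = s := by
        rw [hww, add_sub_cancel_left, ZMod.val_natCast, Nat.mod_eq_of_lt (by omega)]
      have hvw : v ≠ w := by
        intro hh
        have hx : (v - a).val = (w - a).val := by rw [hh]
        rw [hwa] at hx
        omega
      have hadj : (Gnr n r).Adj v w := by
        rw [adj_iff hn]
        refine ⟨hvw, ?_, ?_⟩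
        · -- (w - v).val
          have hlt : (w - a).val < (v - a).val := by omega
          obtain ⟨_, h2⟩ := zm_sub_val (by omega : 2 ≤ n) hlt
          have : w - v = (w - a) - (v - a) := by ring
          rw [this, h2, hwa, ← hdd]
          omega
        · -- (v - w).val
          have hlt : (w - a).val < (v - a).val := by omega
          obtain ⟨h1, _⟩ := zm_sub_val (by omega : 2 ≤ n) hlt
          have : v - w = (v - a) - (w - a) := by ring
          rw [this, h1, hwa, ← hdd]
          omega
      rcases hcov hadj with h | h
      · exact h
      · exfalso
        have := hD h
        rw [mem_arcCover, hwa] at this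
        omega

lemma arcCover_count (hn : 2*r+2 ≤ n) [NeZero n] (i : ZMod n) :
    (Finset.univ.filter (fun a : ZMod n => r < (i - a).val)).card = n - (r+1) := by
  have h1 : (Finset.univ.filter (fun a : ZMod n => r < (i - a).val)).card
      = (Finset.univ.filter (fun b : ZMod n => r < b.val)).card := by
    apply Finset.card_bij (fun a _ => i - a)
    · intro a ha
      simp only [Finset.mem_filter, Finset.mem_univ, true_and, mem_arcCover] at ha ⊢
      exact ha
    · intro a _ a' _ hh
      exact sub_right_injective hh
    · intro b hb
      simp only [Finset.mem_filter, Finset.mem_univ, true_and, mem_arcCover] at hb ⊢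
      exact ⟨i - b, by simpa using hb, by ring⟩
  rw [h1]
  have h2 : Finset.univ.filter (fun b : ZMod n => ¬ r < b.val)
      = (Finset.range (r+1)).image (Nat.cast : ℕ → ZMod n) := by
    ext b
    simp only [Finset.mem_filter, Finset.mem_univ, true_and, not_lt, Finset.mem_image,
      Finset.mem_range]
    constructor
    · intro hb
      exact ⟨b.val, by omega, by rw [ZMod.natCast_val, ZMod.cast_id]⟩
    · rintro ⟨m, hm, rfl⟩
      rw [ZMod.val_natCast, Nat.mod_eq_of_lt (by omega)]
      omega
  have h2c : (Finset.univ.filter (fun b : ZMod n => ¬ r < b.val)).card = r + 1 := by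
    rw [h2, Finset.card_image_of_injOn, Finset.card_range]
    intro m hm m' hm' hmm
    simp only [Finset.coe_range, Set.mem_Iio] at hm hm'
    have := ZMod.val_natCast (n := n) m
    have := ZMod.val_natCast (n := n) m'
    rw [← Nat.mod_eq_of_lt (show m < n by omega), ← Nat.mod_eq_of_lt (show m' < n by omega)]
    rw [← ZMod.val_natCast, ← ZMod.val_natCast, hmm]
  have h3 := Finset.card_filter_add_card_filter_not
    (s := (Finset.univ : Finset (ZMod n))) (p := fun b : ZMod n => r < b.val)
  rw [Finset.card_univ, ZMod.card] at h3
  omega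


end ZModPart
end AuxCombinatorics

section AuxAlgebra


variable {k : Type*} [Field k] {V : Type*}

/-- the ideal of polynomials all of whose monomials have `C`-weight at least `t`. -/
noncomputable def wtIdeal (k : Type*) [Field k] {V : Type*} (C : Finset V) (t : ℕ) :
    Ideal (MvPolynomial V k) where
  carrier := {p | ∀ m ∈ p.support, t ≤ ∑ i ∈ C, m i}
  zero_mem' := by simp
  add_mem' := by
    classical
    intro p q hp hq m hm
    rcases Finset.mem_union.mp (MvPolynomial.support_add hm) with h | h
    exacts [hp m h, hq m h]
  smul_mem' := by
    classical
    intro c p hp m hm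
    rw [smul_eq_mul] at hm
    obtain ⟨m1, hm1, m2, hm2, rfl⟩ := Finset.mem_add.mp (MvPolynomial.support_mul _ _ hm)
    have h1 := hp m2 hm2
    have h2 : ∑ i ∈ C, (m1 + m2) i = ∑ i ∈ C, m1 i + ∑ i ∈ C, m2 i := by
      simp [Finsupp.add_apply, Finset.sum_add_distrib]
    omega

lemma mem_wtIdeal {C : Finset V} {t : ℕ} {p : MvPolynomial V k} :
    p ∈ wtIdeal k C t ↔ ∀ m ∈ p.support, t ≤ ∑ i ∈ C, m i := Iff.rfl

lemma coverPrime_le_wtIdeal (C : Finset V) : coverPrime k C ≤ wtIdeal k C 1 := by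
  rw [coverPrime, Ideal.span_le]
  rintro p ⟨i, hi, rfl⟩
  intro m hm
  rw [MvPolynomial.support_X] at hm
  rw [Finset.mem_singleton] at hm
  subst hm
  classical
  have : ∑ j ∈ C, (Finsupp.single i 1) j = 1 := by
    rw [Finset.sum_congr rfl (fun j _ => Finsupp.single_apply (a := i) (b := (1:ℕ)) (a' := j))]
    rw [Finset.sum_ite_eq C i (fun _ => 1)]
    simp [Finset.mem_coe.mp hi]
  omega

lemma coverPrime_pow_le_wtIdeal (C : Finset V) (t : ℕ) :
    coverPrime k C ^ t ≤ wtIdeal k C t := by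
  induction t with
  | zero => intro p _ m _; simp
  | succ t ih =>
    rw [pow_succ]
    refine Ideal.mul_le.mpr fun p hp q hq => ?_
    classical
    intro m hm
    obtain ⟨m1, hm1, m2, hm2, rfl⟩ := Finset.mem_add.mp (MvPolynomial.support_mul _ _ hm)
    have h1 := ih hp m1 hm1
    have h2 := coverPrime_le_wtIdeal C hq m2 hm2
    have h3 : ∑ i ∈ C, (m1 + m2) i = ∑ i ∈ C, m1 i + ∑ i ∈ C, m2 i := by
      simp [Finsupp.add_apply, Finset.sum_add_distrib]
    omega

lemma prod_mem_pow {R : Type*} [CommRing R] (I : Ideal R) {ι : Type*} (F : Finset ι) (f : ι → R)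
    (hf : ∀ i ∈ F, f i ∈ I) : (∏ i ∈ F, f i) ∈ I ^ F.card := by
  classical
  induction F using Finset.induction with
  | empty => simp [Ideal.one_eq_top]
  | @insert a F' ha ih =>
    rw [Finset.prod_insert ha, Finset.card_insert_of_notMem ha, pow_succ']
    exact Ideal.mul_mem_mul (hf a (Finset.mem_insert_self _ _))
      (ih fun i hi => hf i (Finset.mem_insert_of_mem hi))


lemma witness_mem {k : Type*} [Field k] {V : Type*} [Fintype V] (G : SimpleGraph V)
    (e s t : ℕ) (hts : t ≤ e * s)
    (hC : ∀ C : Finset V, IsMinVertexCover G C → e ≤ C.card) :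
    (∏ i : V, (X i : MvPolynomial V k) ^ s) ∈ symbPow k G t := by
  rw [symbPow]
  rw [Submodule.mem_iInf]
  intro C
  rw [Submodule.mem_iInf]
  intro hCmin
  classical
  rw [← Finset.prod_mul_prod_compl C (fun i => (X i : MvPolynomial V k) ^ s)]
  have hmem : (∏ i ∈ C, (X i : MvPolynomial V k) ^ s) ∈ coverPrime k C ^ (s * C.card) := by
    rw [pow_mul]
    exact prod_mem_pow _ _ _ fun i hi => Ideal.pow_mem_pow
      (Ideal.subset_span (Set.mem_image_of_mem _ (Finset.mem_coe.mpr hi))) s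
  have h1 : e * s ≤ s * C.card := by
    have h2 := hC C hCmin
    calc e * s = s * e := mul_comm _ _
      _ ≤ s * C.card := Nat.mul_le_mul_left s h2
  exact Ideal.mul_mem_right _ _ (Ideal.pow_le_pow_right (hts.trans h1) hmem)

end AuxAlgebra

/-- The Waldschmidt constant of `I = I(G_{n,r})` equals `n/(n-(r+1))`:
`α(I^{(t)})/t → n/(n-(r+1))` as `t → ∞`. -/
theorem stmt13 {k : Type*} [Field k] (n r : ℕ) (hn : 2 ≤ n) (hr : r ≤ n / 2 - 1) :
    Filter.Tendsto (fun t : ℕ => (minDeg (symbPow k (Gnr n r) t) : ℝ) / t)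
      Filter.atTop (nhds ((n : ℝ) / ((n : ℝ) - (r + 1)))) := by
  classical
  have hn2 : 2 * r + 2 ≤ n := by omega
  haveI : NeZero n := ⟨by omega⟩
  set e : ℕ := n - (r + 1) with he
  have he1 : 1 ≤ e := by omega
  -- every minimal vertex cover has at least e elements
  have hC : ∀ C : Finset (ZMod n), IsMinVertexCover (Gnr n r) C → e ≤ C.card := by
    intro C hCmin
    have hindep : ∀ u ∈ Finset.univ \ C, ∀ v ∈ Finset.univ \ C, ¬ (Gnr n r).Adj u v := by
      intro u hu v hv hadj
      rcases hCmin.1 hadj with h | h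
      · simp [Finset.mem_sdiff, h] at hu
      · simp [Finset.mem_sdiff, h] at hv
    have h1 : (Finset.univ \ C).card ≤ r + 1 := indep_card_le hn2 _ hindep
    have h2 : (Finset.univ \ C).card = n - C.card := by
      rw [Finset.card_sdiff_of_subset (Finset.subset_univ _), Finset.card_univ, ZMod.card]
    have h3 : C.card ≤ n := by
      have := Finset.card_le_univ C
      rwa [ZMod.card] at this
    omega
  -- existence of low-degree witnesses
  have hup : ∀ t : ℕ, ∃ p ∈ symbPow k (Gnr n r) t, p ≠ 0 ∧
      p.totalDegree ≤ n * (t / e + 1) := by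
    intro t
    set s : ℕ := t / e + 1 with hs
    have hts : t ≤ e * s := by
      have h1 := Nat.div_add_mod t e
      have h2 := Nat.mod_lt t (show 0 < e by omega)
      calc t = e * (t / e) + t % e := h1.symm
        _ ≤ e * (t / e) + e := by omega
        _ = e * s := by rw [hs]; ring
    refine ⟨∏ i : ZMod n, (X i : MvPolynomial (ZMod n) k) ^ s,
      witness_mem _ e s t hts hC, ?_, ?_⟩
    · rw [Finset.prod_ne_zero_iff]
      exact fun i _ => pow_ne_zero _ (MvPolynomial.X_ne_zero i)
    · calc (∏ i : ZMod n, (X i : MvPolynomial (ZMod n) k) ^ s).totalDegree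
          ≤ ∑ i : ZMod n, ((X i : MvPolynomial (ZMod n) k) ^ s).totalDegree :=
            MvPolynomial.totalDegree_finset_prod _ _
        _ ≤ ∑ _i : ZMod n, s * 1 := by
            refine Finset.sum_le_sum fun i _ => ?_
            calc ((X i : MvPolynomial (ZMod n) k) ^ s).totalDegree
                ≤ s * (X i : MvPolynomial (ZMod n) k).totalDegree :=
                  MvPolynomial.totalDegree_pow _ _
              _ = s * 1 := by rw [MvPolynomial.totalDegree_X]
        _ = n * s := by
            rw [Finset.sum_const, Finset.card_univ, ZMod.card, smul_eq_mul, mul_one]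
  -- lower bound for degrees
  have hlow : ∀ t : ℕ, ∀ p ∈ symbPow k (Gnr n r) t, p ≠ 0 →
      n * t ≤ e * p.totalDegree := by
    intro t p hp hp0
    obtain ⟨m, hm⟩ := (MvPolynomial.support_nonempty.mpr hp0)
    have hwt : ∀ a : ZMod n, t ≤ ∑ i ∈ arcCover n r a, m i := by
      intro a
      have h1 : symbPow k (Gnr n r) t ≤ coverPrime k (arcCover n r a) ^ t :=
        iInf₂_le _ (arcCover_isMinVertexCover hn2 a)
      exact coverPrime_pow_le_wtIdeal _ _ (h1 hp) m hm
    have hsum : n * t ≤ ∑ a : ZMod n, ∑ i ∈ arcCover n r a, m i := by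
      calc n * t = ∑ _a : ZMod n, t := by
            rw [Finset.sum_const, Finset.card_univ, ZMod.card, smul_eq_mul]
        _ ≤ _ := Finset.sum_le_sum fun a _ => hwt a
    have hswap : ∑ a : ZMod n, ∑ i ∈ arcCover n r a, m i = e * ∑ i : ZMod n, m i := by
      calc ∑ a : ZMod n, ∑ i ∈ arcCover n r a, m i
          = ∑ a : ZMod n, ∑ i : ZMod n, if r < (i - a).val then m i else 0 := by
            refine Finset.sum_congr rfl fun a _ => ?_
            rw [arcCover, Finset.sum_filter]
        _ = ∑ i : ZMod n, ∑ a : ZMod n, if r < (i - a).val then m i else 0 :=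
            Finset.sum_comm
        _ = ∑ i : ZMod n, (Finset.univ.filter (fun a : ZMod n => r < (i - a).val)).card * m i := by
            refine Finset.sum_congr rfl fun i _ => ?_
            rw [← Finset.sum_filter, Finset.sum_const, smul_eq_mul]
        _ = ∑ i : ZMod n, e * m i := by
            refine Finset.sum_congr rfl fun i _ => ?_
            rw [arcCover_count hn2 i]
        _ = e * ∑ i : ZMod n, m i := by rw [Finset.mul_sum]
    have hdeg : ∑ i : ZMod n, m i ≤ p.totalDegree := by
      have h1 := MvPolynomial.le_totalDegree hm
      have h2 : (m.sum fun _ e => e) = ∑ i : ZMod n, m i := by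
        rw [Finsupp.sum]
        exact Finset.sum_subset (Finset.subset_univ _)
          (fun i _ hi => Finsupp.notMem_support_iff.mp hi)
      omega
    calc n * t ≤ e * ∑ i : ZMod n, m i := by rw [← hswap]; exact hsum
      _ ≤ e * p.totalDegree := Nat.mul_le_mul_left e hdeg
  -- the min degree function
  have hne : ∀ t : ℕ, {d : ℕ | ∃ p ∈ symbPow k (Gnr n r) t, p ≠ 0 ∧ p.totalDegree = d}.Nonempty := by
    intro t
    obtain ⟨p, h1, h2, _⟩ := hup t
    exact ⟨p.totalDegree, p, h1, h2, rfl⟩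
  have hlowD : ∀ t : ℕ, n * t ≤ e * minDeg (symbPow k (Gnr n r) t) := by
    intro t
    have hmem := Nat.sInf_mem (hne t)
    simp only [Set.mem_setOf_eq] at hmem
    obtain ⟨p, h1, h2, h3⟩ := hmem
    have h4 : minDeg (symbPow k (Gnr n r) t) = p.totalDegree := h3.symm
    rw [h4]
    exact hlow t p h1 h2
  have hupD : ∀ t : ℕ, minDeg (symbPow k (Gnr n r) t) ≤ n * (t / e + 1) := by
    intro t
    obtain ⟨p, h1, h2, h3⟩ := hup t
    have hm : p.totalDegree ∈
        {d : ℕ | ∃ q ∈ symbPow k (Gnr n r) t, q ≠ 0 ∧ q.totalDegree = d} := ⟨p, h1, h2, rfl⟩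
    exact le_trans (Nat.sInf_le hm) h3
  -- the limit
  have hecast : ((n : ℝ) - (r + 1)) = (e : ℝ) := by
    rw [he, Nat.cast_sub (by omega : r + 1 ≤ n)]
    push_cast
    ring
  rw [hecast]
  have hepos : (0 : ℝ) < (e : ℝ) := by exact_mod_cast he1
  have hnpos : (0 : ℝ) < (n : ℝ) := by positivity
  apply tendsto_of_tendsto_of_tendsto_of_le_of_le'
    (g := fun _t : ℕ => (n : ℝ) / (e : ℝ))
    (h := fun t : ℕ => (n : ℝ) / (e : ℝ) + (n : ℝ) * (e : ℝ) / t)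
  · exact tendsto_const_nhds
  · have h0 : Filter.Tendsto (fun t : ℕ => (n : ℝ) * (e : ℝ) / t) Filter.atTop (nhds 0) :=
      tendsto_const_div_atTop_nhds_zero_nat _
    have := Filter.Tendsto.const_add ((n : ℝ) / (e : ℝ)) h0
    simpa using this
  · filter_upwards [Filter.eventually_ge_atTop 1] with t ht
    have htpos : (0 : ℝ) < (t : ℝ) := by exact_mod_cast ht
    rw [div_le_div_iff₀ hepos htpos]
    have h1 := hlowD t
    have h2 : (n : ℝ) * t ≤ (e : ℝ) * minDeg (symbPow k (Gnr n r) t) := by exact_mod_cast h1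
    linarith
  · filter_upwards [Filter.eventually_ge_atTop 1] with t ht
    have htpos : (0 : ℝ) < (t : ℝ) := by exact_mod_cast ht
    have h1 : (minDeg (symbPow k (Gnr n r) t) : ℝ) ≤ (n : ℝ) * ((t / e : ℕ) + 1) := by
      exact_mod_cast hupD t
    have h2 : ((t / e : ℕ) : ℝ) ≤ (t : ℝ) / (e : ℝ) := Nat.cast_div_le
    have h3 : (minDeg (symbPow k (Gnr n r) t) : ℝ) ≤ (n : ℝ) * ((t : ℝ) / e + 1) := by
      nlinarith
    rw [div_le_iff₀ htpos]
    have expand : ((n : ℝ) / e + (n : ℝ) * e / t) * t = (n : ℝ) * ((t : ℝ) / e + 1) + ((n : ℝ) * e - n) := by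
      field_simp
      ring
    have h5 : (1 : ℝ) ≤ (e : ℝ) := by exact_mod_cast he1
    have h6 : (n : ℝ) * 1 ≤ (n : ℝ) * e := by nlinarith
    linarith
end
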